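/- arXiv:2006.12105 — 4 statements merged into one kernel-verified Lean document; each statement's English description precedes it below -/
import Mathlib

section
/- Let f be an inner function on the unit disc with f(0)=0, and let f also denote its boundary map on the unit circle. Then for any integrable function G on the unit circle, the integral of G∘f with respect to normalized Lebesgue measure m equals the integral of G with respect to m. -/
open MeasureTheory Set Metric Filter Complex
open scoped NNReal ENNReal Pointwise

/-- Normalized Lebesgue (arc-length) measure on the unit circle, as a measure on ℂ. -/
noncomputable def m : Measure ℂ :=
  (ENNReal.ofReal (2 * Real.pi))⁻¹ •
    (Measure.map (fun θ : ℝ => Complex.exp ((θ : ℂ) * Complex.I))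
      (volume.restrict (Set.Ioc (0:ℝ) (2 * Real.pi))))

/-- `spow F ε n` is `F^[n]` if `ε = 1` and its complex conjugate if `ε = -1`. -/
noncomputable def spow (F : ℂ → ℂ) (ε : ℤ) (n : ℕ) (z : ℂ) : ℂ :=
  if ε = 1 then F^[n] z else (starRingEnd ℂ) (F^[n] z)

namespace InnerAux

lemma e_cont : Continuous (fun θ : ℝ => Complex.exp ((θ : ℂ) * Complex.I)) := by
  fun_prop

lemma twopi_ne : (ENNReal.ofReal (2 * Real.pi))⁻¹ ≠ 0 := by
  simp [ENNReal.inv_ne_zero, ENNReal.mul_eq_top]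

lemma ae_m_iff {p : ℂ → Prop} (hp : MeasurableSet {z | p z}) :
    (∀ᵐ z ∂m, p z) ↔ ∀ᵐ θ : ℝ ∂(volume.restrict (Set.Ioc (0:ℝ) (2 * Real.pi))),
      p (Complex.exp ((θ : ℂ) * Complex.I)) := by
  rw [m, Measure.ae_ennreal_smul_measure_iff twopi_ne, MeasureTheory.ae_map_iff e_cont.aemeasurable hp]

lemma m_ae_sphere : ∀ᵐ z ∂m, z ∈ sphere (0:ℂ) 1 := by
  refine (ae_m_iff (p := fun z => z ∈ sphere (0:ℂ) 1) isClosed_sphere.measurableSet).mpr ?_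
  filter_upwards with θ
  simp [mem_sphere_iff_norm, Complex.norm_exp_ofReal_mul_I]

lemma m_ae_norm : ∀ᵐ z ∂m, ‖z‖ = 1 := by
  filter_upwards [m_ae_sphere] with z hz
  rwa [mem_sphere_iff_norm, sub_zero] at hz

lemma m_univ : m Set.univ = 1 := by
  rw [m, Measure.smul_apply, Measure.map_apply e_cont.measurable MeasurableSet.univ]
  simp only [Set.preimage_univ, Measure.restrict_apply MeasurableSet.univ, Set.univ_inter,
    Real.volume_Ioc, smul_eq_mul, sub_zero]
  rw [ENNReal.inv_mul_cancel (by simp [Real.pi_pos, Real.two_pi_pos]) (by simp [ENNReal.mul_eq_top])]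

instance : IsProbabilityMeasure m := ⟨m_univ⟩

lemma aesm_m {E : Type*} [TopologicalSpace E] [TopologicalSpace.PseudoMetrizableSpace E]
    {h : ℂ → E} (hc : ContinuousOn h (sphere (0:ℂ) 1)) : AEStronglyMeasurable h m := by
  have hr : m.restrict (sphere (0:ℂ) 1) = m :=
    Measure.restrict_eq_self_of_ae_mem m_ae_sphere
  rw [← hr]
  exact hc.aestronglyMeasurable isClosed_sphere.measurableSet

lemma integral_m (h : ℂ → ℂ) (hm : AEStronglyMeasurable h m) :
    ∫ z, h z ∂m = (2 * Real.pi)⁻¹ •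
      ∫ θ in Set.Ioc (0:ℝ) (2 * Real.pi), h (Complex.exp ((θ : ℂ) * Complex.I)) := by
  rw [m, integral_smul_measure, integral_map e_cont.aemeasurable]
  · congr 1
    rw [ENNReal.toReal_inv, ENNReal.toReal_ofReal Real.two_pi_pos.le]
  · obtain ⟨g, hg, hfg⟩ := hm
    exact ⟨g, hg, by rwa [m, Measure.ae_ennreal_smul_measure_eq twopi_ne] at hfg⟩

/-- Mean value property for the normalized circle measure. -/
lemma meanvalue (g : ℂ → ℂ) (hg : DifferentiableOn ℂ g (ball 0 1))
    {r : ℝ} (hr0 : 0 < r) (hr1 : r < 1) :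
    ∫ z, g ((r:ℂ) * z) ∂m = g 0 := by
  set gr : ℂ → ℂ := fun w => g ((r:ℂ) * w) with hgrdef
  have hmaps : MapsTo (fun w : ℂ => (r:ℂ) * w) (closedBall 0 1) (ball 0 1) := by
    intro w hw
    simp only [mem_closedBall, dist_zero_right] at hw
    simp only [mem_ball, dist_zero_right, norm_mul, Complex.norm_real, Real.norm_eq_abs,
      abs_of_pos hr0]
    calc r * ‖w‖ ≤ r * 1 := by nlinarith
      _ < 1 := by linarith
  have hdiff : DifferentiableOn ℂ gr (closedBall 0 1) :=
    hg.comp ((differentiable_id.const_mul _).differentiableOn) hmaps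
  have hdcc : DiffContOnCl ℂ gr (ball 0 1) :=
    ⟨hdiff.mono ball_subset_closedBall, by
      rw [closure_ball (0:ℂ) one_ne_zero]; exact hdiff.continuousOn⟩
  have key := hdcc.circleIntegral_sub_inv_smul (mem_ball_self one_pos)
  rw [circleIntegral] at key
  have hrw : ∀ θ : ℝ, deriv (circleMap 0 1) θ •
      ((circleMap 0 1 θ - 0)⁻¹ • gr (circleMap 0 1 θ)) = Complex.I * gr (circleMap 0 1 θ) := by
    intro θ
    have hne : circleMap 0 1 θ ≠ 0 := by
      intro h
      have := norm_circleMap_zero 1 θ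
      rw [h] at this; simp at this
    rw [deriv_circleMap]
    simp only [smul_eq_mul, sub_zero]
    field_simp
  simp_rw [hrw] at key
  rw [intervalIntegral.integral_const_mul] at key
  have key2 : (∫ θ in Set.Ioc (0:ℝ) (2*Real.pi), gr (circleMap 0 1 θ))
      = (2*Real.pi : ℝ) * gr 0 := by
    rw [← intervalIntegral.integral_of_le Real.two_pi_pos.le]
    apply mul_left_cancel₀ Complex.I_ne_zero
    rw [key, smul_eq_mul]
    push_cast
    ring
  have hcont : ContinuousOn gr (sphere (0:ℂ) 1) :=
    (hg.continuousOn.comp ((continuous_const.mul continuous_id).continuousOn)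
      (hmaps.mono_left sphere_subset_closedBall))
  rw [integral_m gr (aesm_m hcont)]
  have hcm : ∀ θ : ℝ, circleMap 0 1 θ = Complex.exp ((θ:ℂ) * Complex.I) := fun θ => by
    simp [circleMap]
  simp_rw [← hcm]
  rw [key2]
  have h0 : gr 0 = g 0 := by simp [hgrdef]
  rw [h0, Complex.real_smul]
  push_cast
  rw [← mul_assoc, inv_mul_cancel₀ (by simp [Real.pi_ne_zero] : (2*(Real.pi:ℂ)) ≠ 0), one_mul]

/-- Integral of z^n over the circle is 0 for n ≠ 0. -/
lemma integral_zpow (n : ℕ) (hn : n ≠ 0) : ∫ z, z ^ n ∂m = 0 := by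
  have hmv := meanvalue (fun w => w ^ n) ((differentiable_pow n).differentiableOn)
      (by norm_num : (0:ℝ) < 1/2) (by norm_num : (1:ℝ)/2 < 1)
  simp only [mul_pow, zero_pow hn] at hmv
  rw [integral_const_mul] at hmv
  have h2 : (((1:ℝ)/2 : ℝ) : ℂ) ^ n ≠ 0 := by
    apply pow_ne_zero
    norm_num
  exact (mul_eq_zero.mp hmv).resolve_left h2

/-- The sequence of radii. -/
noncomputable def rk (k : ℕ) : ℝ := 1 - 1/(k+2)

lemma rk_pos (k : ℕ) : 0 < rk k := by
  have h1 : (1:ℝ)/(k+2) ≤ 1/2 := by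
    apply div_le_div_of_nonneg_left <;> [norm_num; norm_num; (push_cast; linarith [Nat.cast_nonneg (α := ℝ) k])]
  simp only [rk]; linarith

lemma rk_lt_one (k : ℕ) : rk k < 1 := by
  have : (0:ℝ) < 1/(k+2) := by positivity
  simp only [rk]; linarith

lemma rk_tendsto : Tendsto rk atTop (nhdsWithin 1 (Set.Iio 1)) := by
  have hrk : rk = fun k : ℕ => 1 - 1/((k:ℝ)+2) := rfl
  rw [tendsto_nhdsWithin_iff, hrk]
  constructor
  · have h2 : Tendsto (fun k : ℕ => (k:ℝ) + 2) atTop atTop :=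
      tendsto_atTop_add_const_right _ 2 tendsto_natCast_atTop_atTop
    have h3 : Tendsto (fun k : ℕ => 1/((k:ℝ)+2)) atTop (nhds 0) := by
      simpa [one_div, Pi.inv_def] using h2.inv_tendsto_atTop
    have h4 : Tendsto (fun k : ℕ => 1 - 1/((k:ℝ)+2)) atTop (nhds (1 - 0)) :=
      (tendsto_const_nhds (x := (1:ℝ))).sub h3
    simpa [one_div] using h4
  · exact Eventually.of_forall fun k => by rw [← hrk]; exact rk_lt_one k

/-- DCT: integral of F^n over the circle is 0 for n ≠ 0. -/
lemma integral_Fpow {f F : ℂ → ℂ}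
    (hf : DifferentiableOn ℂ f (Metric.ball 0 1))
    (hmap : Set.MapsTo f (Metric.ball 0 1) (Metric.ball 0 1))
    (h0 : f 0 = 0)
    (hbd : ∀ᵐ z ∂m, Filter.Tendsto (fun r : ℝ => f ((r : ℂ) * z))
      (nhdsWithin 1 (Set.Iio 1)) (nhds (F z)))
    (n : ℕ) (hn : n ≠ 0) : ∫ z, (F z) ^ n ∂m = 0 := by
  have hmapsS : ∀ {r : ℝ}, 0 < r → r < 1 →
      MapsTo (fun w : ℂ => (r:ℂ) * w) (sphere (0:ℂ) 1) (ball 0 1) := by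
    intro r hr0 hr1 w hw
    simp only [mem_sphere_iff_norm, sub_zero] at hw
    simp only [mem_ball, dist_zero_right, norm_mul, Complex.norm_real, Real.norm_eq_abs,
      abs_of_pos hr0, hw, mul_one]
    exact hr1
  have haesm : ∀ k : ℕ, AEStronglyMeasurable (fun z => (f ((rk k : ℂ) * z)) ^ n) m := by
    intro k
    apply aesm_m
    exact ((hf.continuousOn.comp ((continuous_const.mul continuous_id).continuousOn)
      (hmapsS (rk_pos k) (rk_lt_one k))).pow n)
  have hbound : ∀ k : ℕ, ∀ᵐ z ∂m, ‖(f ((rk k : ℂ) * z)) ^ n‖ ≤ (1:ℝ) := by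
    intro k
    filter_upwards [m_ae_sphere] with z hz
    have h1 : f ((rk k : ℂ) * z) ∈ ball (0:ℂ) 1 := hmap (hmapsS (rk_pos k) (rk_lt_one k) hz)
    simp only [mem_ball, dist_zero_right] at h1
    rw [norm_pow]
    exact pow_le_one₀ (norm_nonneg _) h1.le
  have hlim : ∀ᵐ z ∂m, Tendsto (fun k => (f ((rk k : ℂ) * z)) ^ n) atTop
      (nhds ((F z) ^ n)) := by
    filter_upwards [hbd] with z hz
    exact (hz.comp rk_tendsto).pow n
  have hDCT := tendsto_integral_of_dominated_convergence (fun _ => (1:ℝ)) haesm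
    (integrable_const 1) hbound hlim
  have hval : ∀ k : ℕ, (∫ z, (f ((rk k : ℂ) * z)) ^ n ∂m) = 0 := by
    intro k
    have := meanvalue (fun w => (f w) ^ n) (hf.pow n) (rk_pos k) (rk_lt_one k)
    simpa [h0, zero_pow hn] using this
  simp_rw [hval] at hDCT
  exact (tendsto_nhds_unique tendsto_const_nhds hDCT).symm

/-! ### Functions on the sphere -/

noncomputable def extC (h : C(sphere (0:ℂ) 1, ℂ)) : ℂ → ℂ :=
  Function.extend (Subtype.val) (⇑h) 0

lemma extC_apply (h : C(sphere (0:ℂ) 1, ℂ)) {z : ℂ} (hz : z ∈ sphere (0:ℂ) 1) :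
    extC h z = h ⟨z, hz⟩ := by
  rw [extC]
  exact Subtype.val_injective.extend_apply _ _ ⟨z, hz⟩

lemma extC_apply' (h : C(sphere (0:ℂ) 1, ℂ)) {z : ℂ} (hz : z ∉ sphere (0:ℂ) 1) :
    extC h z = 0 := by
  rw [extC, Function.extend_apply']
  · rfl
  · rintro ⟨a, rfl⟩; exact hz a.2

lemma extC_measurable (h : C(sphere (0:ℂ) 1, ℂ)) : Measurable (extC h) :=
  (MeasurableEmbedding.subtype_coe isClosed_sphere.measurableSet).measurable_extend
    h.continuous.measurable measurable_const

lemma extC_norm_le (h : C(sphere (0:ℂ) 1, ℂ)) (z : ℂ) : ‖extC h z‖ ≤ ‖h‖ := by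
  by_cases hz : z ∈ sphere (0:ℂ) 1
  · rw [extC_apply h hz]; exact h.norm_coe_le_norm _
  · rw [extC_apply' h hz]; simp

lemma extC_add (h h' : C(sphere (0:ℂ) 1, ℂ)) (z : ℂ) :
    extC (h + h') z = extC h z + extC h' z := by
  by_cases hz : z ∈ sphere (0:ℂ) 1
  · simp [extC_apply _ hz]
  · simp [extC_apply' _ hz]

lemma extC_smul (c : ℂ) (h : C(sphere (0:ℂ) 1, ℂ)) (z : ℂ) :
    extC (c • h) z = c * extC h z := by
  by_cases hz : z ∈ sphere (0:ℂ) 1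
  · simp [extC_apply _ hz]
  · simp [extC_apply' _ hz]

lemma extC_integrable (h : C(sphere (0:ℂ) 1, ℂ)) (μ : Measure ℂ) [IsFiniteMeasure μ] :
    Integrable (extC h) μ :=
  Integrable.mono' (integrable_const ‖h‖) (extC_measurable h).aestronglyMeasurable
    (Eventually.of_forall (extC_norm_le h))

/-- Integration of (the extension of) a continuous function on the sphere,
as a continuous linear functional. -/
noncomputable def LL (μ : Measure ℂ) [IsFiniteMeasure μ] : C(sphere (0:ℂ) 1, ℂ) →L[ℂ] ℂ :=
  LinearMap.mkContinuous
    { toFun := fun h => ∫ z, extC h z ∂μ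
      map_add' := fun h h' => by
        simp_rw [extC_add]
        exact integral_add (extC_integrable h μ) (extC_integrable h' μ)
      map_smul' := fun c h => by
        simp_rw [extC_smul, RingHom.id_apply]
        exact integral_const_mul c _ }
    ((μ Set.univ).toReal)
    (fun h => by
      have := norm_integral_le_of_norm_le_const (μ := μ)
        (Eventually.of_forall (extC_norm_le h))
      simpa [mul_comm, measureReal_def] using this)

lemma LL_apply (μ : Measure ℂ) [IsFiniteMeasure μ] (h : C(sphere (0:ℂ) 1, ℂ)) :
    LL μ h = ∫ z, extC h z ∂μ := rfl

/-! ### Monomials -/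

noncomputable def monom (a b : ℕ) : C(sphere (0:ℂ) 1, ℂ) :=
  ⟨fun z => (z:ℂ)^a * ((starRingEnd ℂ) (z:ℂ))^b,
   (continuous_subtype_val.pow a).mul ((continuous_star.comp continuous_subtype_val).pow b)⟩

lemma monom_apply (a b : ℕ) (z : sphere (0:ℂ) 1) :
    monom a b z = (z:ℂ)^a * ((starRingEnd ℂ) (z:ℂ))^b := rfl

lemma monom_mul (a b c d : ℕ) : monom a b * monom c d = monom (a+c) (b+d) := by
  ext z
  simp only [ContinuousMap.mul_apply, monom_apply, pow_add]
  ring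

lemma monom_star (a b : ℕ) : star (monom a b) = monom b a := by
  ext z
  simp only [ContinuousMap.star_apply, monom_apply]
  simp only [star_mul', star_pow, RCLike.star_def, Complex.conj_conj]
  ring

lemma monom_one : monom 0 0 = 1 := by
  ext z
  simp [monom_apply]

lemma pow_conj_eval {z : ℂ} (hz : ‖z‖ = 1) (a b : ℕ) :
    z^a * ((starRingEnd ℂ) z)^b =
      if a = b then 1 else if b < a then z^(a-b) else ((starRingEnd ℂ) z)^(b-a) := by
  have habs : ‖z‖ = 1 := by exact hz
  have h1 : z * (starRingEnd ℂ) z = 1 := by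
    rw [Complex.mul_conj, Complex.normSq_eq_norm_sq, habs]
    norm_num
  rcases Nat.lt_trichotomy a b with h | h | h
  · rw [if_neg (by omega), if_neg (by omega)]
    have : b = (b - a) + a := by omega
    rw [this, pow_add, ← mul_assoc, mul_comm (z^a), mul_assoc, ← mul_pow, h1, one_pow, mul_one]
    congr 1
    omega
  · subst h
    rw [if_pos rfl, ← mul_pow, h1, one_pow]
  · rw [if_neg (by omega), if_pos h]
    have : a = (a - b) + b := by omega
    rw [this, pow_add, mul_assoc, ← mul_pow, h1, one_pow, mul_one]
    congr 1
    omega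

lemma LL_m_monom (a b : ℕ) : LL m (monom a b) = if a = b then 1 else 0 := by
  rw [LL_apply]
  have hae : ∀ᵐ z ∂m, extC (monom a b) z =
      (if a = b then 1 else if b < a then z^(a-b) else ((starRingEnd ℂ) z)^(b-a)) := by
    filter_upwards [m_ae_sphere, m_ae_norm] with z hz hn
    rw [extC_apply _ hz, monom_apply]
    exact pow_conj_eval hn a b
  rw [integral_congr_ae hae]
  split_ifs with h1 h2
  · simp
  · exact integral_zpow _ (by omega)
  · have : (fun z : ℂ => ((starRingEnd ℂ) z)^(b-a)) = fun z : ℂ => (starRingEnd ℂ) (z^(b-a)) := by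
      funext z; rw [map_pow]
    rw [this, integral_conj, integral_zpow _ (by omega), map_zero]

lemma LL_map_monom (F F' : ℂ → ℂ) (hF' : Measurable F') (hFF' : F =ᵐ[m] F')
    (hnorm : ∀ᵐ z ∂m, ‖F z‖ = 1) (hpow : ∀ n : ℕ, n ≠ 0 → (∫ z, (F z)^n ∂m) = 0)
    (a b : ℕ) :
    LL (Measure.map F' m) (monom a b) = if a = b then 1 else 0 := by
  haveI : IsFiniteMeasure (Measure.map F' m) := Measure.isFiniteMeasure_map m F'
  have h1 : LL (Measure.map F' m) (monom a b) = ∫ z, extC (monom a b) (F' z) ∂m := by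
    rw [LL_apply]
    exact integral_map hF'.aemeasurable (extC_measurable _).aestronglyMeasurable
  rw [h1]
  have hae : ∀ᵐ z ∂m, extC (monom a b) (F' z) =
      (if a = b then 1 else if b < a then (F z)^(a-b)
        else ((starRingEnd ℂ) (F z))^(b-a)) := by
    filter_upwards [hFF', hnorm] with z he hn
    have hz : F' z ∈ sphere (0:ℂ) 1 := by
      rw [mem_sphere_iff_norm, sub_zero, ← he]
      exact hn
    rw [extC_apply _ hz, monom_apply]
    have hcoe : ((⟨F' z, hz⟩ : sphere (0:ℂ) 1) : ℂ) = F z := he.symm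
    rw [hcoe]
    exact pow_conj_eval hn a b
  rw [integral_congr_ae hae]
  split_ifs with h1 h2
  · simp
  · exact hpow _ (by omega)
  · have : (fun z : ℂ => ((starRingEnd ℂ) (F z))^(b-a))
        = fun z : ℂ => (starRingEnd ℂ) ((F z)^(b-a)) := by
      funext z; rw [map_pow]
    rw [this, integral_conj, hpow _ (by omega), map_zero]

lemma LL_eq_of_monom (L1 L2 : C(sphere (0:ℂ) 1, ℂ) →L[ℂ] ℂ)
    (hmon : ∀ a b : ℕ, L1 (monom a b) = L2 (monom a b)) (h : C(sphere (0:ℂ) 1, ℂ)) :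
    L1 h = L2 h := by
  haveI : CompactSpace (sphere (0:ℂ) 1) := isCompact_iff_compactSpace.mp (isCompact_sphere 0 1)
  set T : Set C(sphere (0:ℂ) 1, ℂ) := {g | ∃ a b : ℕ, g = monom a b} with hT
  have hsep : (StarAlgebra.adjoin ℂ {monom 1 0}).SeparatesPoints := by
    intro x y hxy
    refine ⟨_, ⟨monom 1 0, StarAlgebra.subset_adjoin ℂ _ rfl, rfl⟩, ?_⟩
    simp only [monom_apply, pow_one, pow_zero, mul_one]
    exact fun hc => hxy (Subtype.ext hc)
  have hdense := ContinuousMap.starSubalgebra_topologicalClosure_eq_top_of_separatesPoints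
    (StarAlgebra.adjoin ℂ {monom 1 0}) hsep
  have hTmul : T * T ⊆ T := by
    rintro x ⟨g1, hg1, g2, hg2, rfl⟩
    obtain ⟨a, b, rfl⟩ := hg1
    obtain ⟨c, d, rfl⟩ := hg2
    exact ⟨a + c, b + d, monom_mul a b c d⟩
  have hspan_mul : ∀ x y, x ∈ Submodule.span ℂ T → y ∈ Submodule.span ℂ T →
      x * y ∈ Submodule.span ℂ T := by
    intro x y hx hy
    have h2 := Submodule.mul_mem_mul hx hy
    rw [Submodule.span_mul_span] at h2
    exact Submodule.span_mono hTmul h2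
  have hspan_star : ∀ x, x ∈ Submodule.span ℂ T → star x ∈ Submodule.span ℂ T := by
    intro x hx
    induction hx using Submodule.span_induction with
    | mem g hg =>
      obtain ⟨a, b, rfl⟩ := hg
      rw [monom_star]
      exact Submodule.subset_span ⟨b, a, rfl⟩
    | zero => rw [star_zero]; exact Submodule.zero_mem _
    | add x y hx hy ihx ihy => rw [star_add]; exact Submodule.add_mem _ ihx ihy
    | smul c x hx ih => rw [star_smul]; exact Submodule.smul_mem _ _ ih
  have hAspan : ∀ x ∈ (StarAlgebra.adjoin ℂ {monom 1 0} : StarSubalgebra ℂ _),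
      x ∈ Submodule.span ℂ T := by
    intro x hx
    induction hx using StarAlgebra.adjoin_induction with
    | mem g hg =>
      rcases hg with rfl
      exact Submodule.subset_span ⟨1, 0, rfl⟩
    | algebraMap r =>
      rw [Algebra.algebraMap_eq_smul_one]
      exact Submodule.smul_mem _ r (Submodule.subset_span ⟨0, 0, monom_one.symm⟩)
    | add x y hx hy ihx ihy => exact Submodule.add_mem _ ihx ihy
    | mul x y hx hy ihx ihy => exact hspan_mul _ _ ihx ihy
    | star x hx ih => exact hspan_star _ ih
  have hspan_eq : ∀ x ∈ Submodule.span ℂ T, L1 x = L2 x := by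
    intro x hx
    induction hx using Submodule.span_induction with
    | mem g hg => obtain ⟨a, b, rfl⟩ := hg; exact hmon a b
    | zero => simp
    | add x y hx hy ihx ihy => simp [ihx, ihy]
    | smul c x hx ih => simp [ih]
  have hclosed : IsClosed {g : C(sphere (0:ℂ) 1, ℂ) | L1 g = L2 g} :=
    isClosed_eq L1.continuous L2.continuous
  have hsub : closure ((StarAlgebra.adjoin ℂ {monom 1 0} : StarSubalgebra ℂ _) : Set _)
      ⊆ {g | L1 g = L2 g} :=
    closure_minimal (fun x hx => hspan_eq x (hAspan x hx)) hclosed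
  have hmem : h ∈ closure ((StarAlgebra.adjoin ℂ {monom 1 0} : StarSubalgebra ℂ _) : Set _) := by
    rw [← StarSubalgebra.topologicalClosure_coe, hdense]
    trivial
  exact hsub hmem

end InnerAux

open InnerAux in
theorem stmt0 (f F : ℂ → ℂ)
    (hf : DifferentiableOn ℂ f (Metric.ball 0 1))
    (hmap : Set.MapsTo f (Metric.ball 0 1) (Metric.ball 0 1))
    (h0 : f 0 = 0)
    (hbd : ∀ᵐ z ∂m, Filter.Tendsto (fun r : ℝ => f ((r : ℂ) * z))
      (nhdsWithin 1 (Set.Iio 1)) (nhds (F z)))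
    (hinner : ∀ᵐ z ∂m, ‖F z‖ = 1)
    (G : ℂ → ℂ) (hG : Integrable G m) :
    ∫ z, G (F z) ∂m = ∫ z, G z ∂m := by
  classical
  have haesm_seq : ∀ k : ℕ, AEStronglyMeasurable (fun z => f ((rk k : ℂ) * z)) m := by
    intro k
    apply aesm_m
    refine hf.continuousOn.comp ((continuous_const.mul continuous_id).continuousOn)
      (fun w hw => ?_)
    simp only [mem_sphere_iff_norm, sub_zero] at hw
    simp only [mem_ball, dist_zero_right, norm_mul, Complex.norm_real, Real.norm_eq_abs,
      abs_of_pos (rk_pos k), hw, mul_one]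
    exact rk_lt_one k
  have hlim : ∀ᵐ z ∂m, Tendsto (fun k => f ((rk k : ℂ) * z)) atTop (nhds (F z)) := by
    filter_upwards [hbd] with z hz
    exact hz.comp rk_tendsto
  have hFaesm : AEStronglyMeasurable F m :=
    aestronglyMeasurable_of_tendsto_ae atTop haesm_seq hlim
  set F' := hFaesm.mk F with hF'def
  have hF'meas : Measurable F' := hFaesm.stronglyMeasurable_mk.measurable
  have hFF' : F =ᵐ[m] F' := hFaesm.ae_eq_mk
  haveI : IsFiniteMeasure (Measure.map F' m) := Measure.isFiniteMeasure_map m F'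
  have hpow : ∀ n : ℕ, n ≠ 0 → (∫ z, (F z) ^ n ∂m) = 0 := integral_Fpow hf hmap h0 hbd
  have hmon : ∀ a b : ℕ, LL (Measure.map F' m) (monom a b) = LL m (monom a b) := by
    intro a b
    rw [LL_map_monom F F' hF'meas hFF' hinner hpow a b, LL_m_monom a b]
  have hLL : ∀ h, LL (Measure.map F' m) h = LL m h := LL_eq_of_monom _ _ hmon
  have hS' : ∀ᵐ z ∂m, F' z ∈ sphere (0:ℂ) 1 := by
    filter_upwards [hFF', hinner] with z he hn
    rw [mem_sphere_iff_norm, sub_zero, ← he]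
    exact hn
  have hmu : Measure.map F' m = m := by
    apply ext_of_forall_lintegral_eq_of_IsFiniteMeasure
    intro g
    have hCcont : Continuous (fun zs : sphere (0:ℂ) 1 => ((g zs : ℝ) : ℂ)) :=
      Complex.continuous_ofReal.comp (NNReal.continuous_coe.comp
        (g.continuous.comp continuous_subtype_val))
    set hC : C(sphere (0:ℂ) 1, ℂ) := ⟨fun zs => ((g zs : ℝ) : ℂ), hCcont⟩ with hCdef
    have h1 := hLL hC
    rw [LL_apply, LL_apply,
      integral_map hF'meas.aemeasurable (extC_measurable _).aestronglyMeasurable] at h1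
    have e1 : ∀ᵐ z ∂m, extC hC (F' z) = ((g (F' z) : ℝ) : ℂ) := by
      filter_upwards [hS'] with z hz
      rw [extC_apply _ hz]
      rfl
    have e2 : ∀ᵐ z ∂m, extC hC z = ((g z : ℝ) : ℂ) := by
      filter_upwards [m_ae_sphere] with z hz
      rw [extC_apply _ hz]
      rfl
    have h2 : ((∫ z, (g (F' z) : ℝ) ∂m : ℝ) : ℂ) = ((∫ z, (g z : ℝ) ∂m : ℝ) : ℂ) :=
      calc ((∫ z, (g (F' z) : ℝ) ∂m : ℝ) : ℂ)
          = ∫ z, ((g (F' z) : ℝ) : ℂ) ∂m := integral_ofReal.symm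
        _ = ∫ z, extC hC (F' z) ∂m := (integral_congr_ae e1).symm
        _ = ∫ z, extC hC z ∂m := h1
        _ = ∫ z, ((g z : ℝ) : ℂ) ∂m := integral_congr_ae e2
        _ = ((∫ z, (g z : ℝ) ∂m : ℝ) : ℂ) := integral_ofReal
    have hreal : (∫ z, (g (F' z) : ℝ) ∂m) = ∫ z, (g z : ℝ) ∂m := by exact_mod_cast h2
    have hint1 : Integrable (fun z => (g (F' z) : ℝ)) m := by
      refine Integrable.mono' (integrable_const ((nndist g 0 : ℝ≥0) : ℝ))
        (((NNReal.continuous_coe.comp g.continuous).measurable.comp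
          hF'meas).aestronglyMeasurable) (Eventually.of_forall fun z => ?_)
      rw [Real.norm_eq_abs, _root_.abs_of_nonneg (g (F' z)).coe_nonneg]
      exact_mod_cast BoundedContinuousFunction.NNReal.upper_bound g (F' z)
    have hint2 : Integrable (fun z => (g z : ℝ)) m :=
      BoundedContinuousFunction.integrable_of_nnreal (μ := m) g
    rw [lintegral_map (f := fun x => ((g x : ℝ≥0) : ℝ≥0∞))
      (measurable_coe_nnreal_ennreal.comp g.continuous.measurable) hF'meas]
    calc ∫⁻ z, (g (F' z) : ℝ≥0∞) ∂m = ENNReal.ofReal (∫ z, (g (F' z) : ℝ) ∂m) := by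
          rw [lintegral_coe_eq_integral _ hint1]
      _ = ENNReal.ofReal (∫ z, (g z : ℝ) ∂m) := by rw [hreal]
      _ = ∫⁻ z, (g z : ℝ≥0∞) ∂m := by rw [lintegral_coe_eq_integral _ hint2]
  have hGm' : AEStronglyMeasurable G (Measure.map F' m) := by
    rw [hmu]; exact hG.1
  calc ∫ z, G (F z) ∂m = ∫ z, G (F' z) ∂m := by
        apply integral_congr_ae
        filter_upwards [hFF'] with z hz
        rw [hz]
    _ = ∫ z, G z ∂(Measure.map F' m) := (integral_map hF'meas.aemeasurable hGm').symm
    _ = ∫ z, G z ∂m := by rw [hmu]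
end

section
/- Let f be an inner function with f(0)=0 that is not a rotation, and let ε_1 ∈ {1,−1}. Let n_1,n_2,n_3,n_4 be positive integers with max{n_1,n_2} < min{n_3,n_4}. Then ∫_{∂𝔻} f^{ε_1 n_1}·f^{−ε_1 n_2}·f^{n_3}·f^{n_4} dm = 0. -/
open MeasureTheory Set Metric Filter Complex

namespace Aux

noncomputable def em : Measure ℂ :=
  Measure.map (fun θ : ℝ => Complex.exp ((θ : ℂ) * Complex.I))
      (volume.restrict (Set.Ioc (0:ℝ) (2 * Real.pi)))

lemma m_eq : m = (ENNReal.ofReal (2 * Real.pi))⁻¹ • em := rfl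

lemma meas_e : Measurable (fun θ : ℝ => Complex.exp ((θ : ℂ) * Complex.I)) :=
  ((Complex.continuous_ofReal.mul continuous_const).cexp).measurable

lemma em_univ : em Set.univ = ENNReal.ofReal (2 * Real.pi) := by
  rw [em, Measure.map_apply meas_e MeasurableSet.univ]
  simp [Real.volume_Ioc, Real.pi_pos.le]

lemma em_sphere : ∀ᵐ z ∂em, ‖z‖ = 1 := by
  rw [em]
  rw [ae_map_iff meas_e.aemeasurable]
  · filter_upwards with θ
    simp [Complex.norm_exp]
  · exact (measurableSet_eq_fun measurable_norm measurable_const)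

lemma m_sphere : ∀ᵐ z ∂m, ‖z‖ = 1 := by
  rw [m_eq]
  exact Measure.ae_smul_measure em_sphere _

instance m_prob : IsProbabilityMeasure m := by
  constructor
  rw [m_eq, Measure.smul_apply, em_univ, smul_eq_mul]
  rw [ENNReal.inv_mul_cancel]
  · simp [Real.pi_pos]
  · exact ENNReal.ofReal_ne_top

/-- Generic integral formula. -/
lemma integral_m (φ : ℂ → ℂ) (hφ : AEStronglyMeasurable φ em) :
    ∫ z, φ z ∂m
      = (2 * Real.pi)⁻¹ • ∫ θ in Set.Ioc (0:ℝ) (2 * Real.pi),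
          φ (Complex.exp ((θ : ℂ) * Complex.I)) := by
  rw [m_eq, integral_smul_measure, em, integral_map meas_e.aemeasurable (by rwa [← em])]
  congr 1
  rw [ENNReal.toReal_inv, ENNReal.toReal_ofReal (by positivity)]

lemma integral_exp_int (n : ℤ) (hn : n ≠ 0) :
    ∫ θ in Set.Ioc (0:ℝ) (2 * Real.pi), Complex.exp ((n : ℂ) * θ * Complex.I) = 0 := by
  have h := integral_exp_mul_complex (a := 0) (b := 2 * Real.pi)
    (c := (n : ℂ) * Complex.I) (by simp [Complex.ext_iff, hn])
  rw [intervalIntegral.integral_of_le (by positivity)] at h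
  have : ∀ θ : ℝ, (n : ℂ) * θ * Complex.I = ((n : ℂ) * Complex.I) * θ := by intro θ; ring
  simp only [this]
  rw [h]
  rw [show ((n:ℂ) * Complex.I) * ((2:ℝ) * Real.pi : ℝ) = (n : ℂ) * (2 * Real.pi * Complex.I) by
    push_cast; ring]
  rw [Complex.exp_int_mul_two_pi_mul_I]
  simp

lemma exp_pow_conj (θ : ℝ) (i k : ℕ) :
    (Complex.exp ((θ : ℂ) * Complex.I))^i
      * (starRingEnd ℂ (Complex.exp ((θ : ℂ) * Complex.I)))^k
      = Complex.exp ((((i:ℤ) - (k:ℤ) : ℤ) : ℂ) * θ * Complex.I) := by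
  rw [← Complex.exp_conj]
  rw [← Complex.exp_nat_mul, ← Complex.exp_nat_mul, ← Complex.exp_add]
  congr 1
  simp [Complex.conj_ofReal, map_mul, Complex.conj_I]
  push_cast
  ring

lemma integral_monomial (i k : ℕ) :
    ∫ z, z ^ i * (starRingEnd ℂ z) ^ k ∂m = if i = k then 1 else 0 := by
  have hcont : Continuous fun z : ℂ => z ^ i * (starRingEnd ℂ z) ^ k :=
    (continuous_pow i).mul ((Complex.continuous_conj).pow k)
  rw [integral_m _ hcont.aestronglyMeasurable]
  simp only [exp_pow_conj]
  by_cases h : i = k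
  · subst h
    simp only [sub_self, Int.cast_zero, zero_mul, Complex.exp_zero, if_pos rfl]
    rw [setIntegral_const]
    rw [Measure.real, Real.volume_Ioc]
    rw [show (2 * Real.pi - 0 : ℝ) = 2 * Real.pi by ring]
    rw [ENNReal.toReal_ofReal (by positivity), smul_smul,
      inv_mul_cancel₀ (by positivity), one_smul]
    simp
  · rw [if_neg h]
    rw [integral_exp_int ((i:ℤ) - (k:ℤ)) (sub_ne_zero.2 (fun hh => h (by exact_mod_cast hh)))]
    simp

lemma integral_z_pow (k : ℕ) (hk : k ≠ 0) : ∫ z, z ^ k ∂m = 0 := by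
  have := integral_monomial k 0
  simpa [hk] using this

end Aux


namespace Aux
section B
variable {g : ℂ → ℂ}

lemma aesm_em_of_continuousOn {φ : ℂ → ℂ} {s : Set ℂ} (hs : MeasurableSet s)
    (hsub : Metric.sphere (0:ℂ) 1 ⊆ s) (hφ : ContinuousOn φ s) :
    AEStronglyMeasurable φ em := by
  have h1 : ∀ᵐ z ∂em, z ∈ s := by
    filter_upwards [em_sphere] with z hz
    exact hsub (by simpa [mem_sphere_iff_norm] using hz)
  have := hφ.aestronglyMeasurable hs (μ := em)
  rwa [Measure.restrict_eq_self_of_ae_mem h1] at this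

lemma aesm_m_of_continuousOn {φ : ℂ → ℂ} {s : Set ℂ} (hs : MeasurableSet s)
    (hsub : Metric.sphere (0:ℂ) 1 ⊆ s) (hφ : ContinuousOn φ s) :
    AEStronglyMeasurable φ m := by
  have h1 : ∀ᵐ z ∂m, z ∈ s := by
    filter_upwards [m_sphere] with z hz
    exact hsub (by simpa [mem_sphere_iff_norm] using hz)
  have := hφ.aestronglyMeasurable hs (μ := m)
  rwa [Measure.restrict_eq_self_of_ae_mem h1] at this

lemma radial_coeff (hg : DifferentiableOn ℂ g (Metric.ball 0 1))
    {r : ℝ} (hr0 : 0 < r) (hr1 : r < 1) (j : ℕ) :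
    ∫ z, (starRingEnd ℂ z) ^ j * g ((r : ℂ) * z) ∂m
      = (cauchyPowerSeries (fun w => g ((r:ℂ) * w)) 0 1).coeff j := by
  set h : ℂ → ℂ := fun w => g ((r:ℂ) * w) with hh
  have hrinv : (1:ℝ) < r⁻¹ := (one_lt_inv₀ hr0).2 hr1
  have hcont_h : ContinuousOn h (Metric.ball (0:ℂ) r⁻¹) := by
    apply hg.continuousOn.comp ((continuous_const.mul continuous_id).continuousOn)
    intro w hw
    simp only [mem_ball, dist_zero_right] at hw ⊢
    calc ‖(r:ℂ) * w‖ = r * ‖w‖ := by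
          rw [norm_mul, Complex.norm_real, Real.norm_of_nonneg hr0.le]
      _ < r * r⁻¹ := by exact mul_lt_mul_of_pos_left hw hr0
      _ = 1 := mul_inv_cancel₀ hr0.ne'
  -- LHS as an Ioc integral
  have hsub : Metric.sphere (0:ℂ) 1 ⊆ Metric.ball (0:ℂ) r⁻¹ := fun z hz => by
    simp only [mem_sphere_iff_norm, sub_zero] at hz
    simp [mem_ball, dist_zero_right, hz, hrinv]
  have hφcont : ContinuousOn (fun z => (starRingEnd ℂ z) ^ j * h z) (Metric.ball (0:ℂ) r⁻¹) :=
    ((Complex.continuous_conj.pow j).continuousOn).mul hcont_h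
  rw [integral_m _ (aesm_em_of_continuousOn measurableSet_ball hsub hφcont)]
  -- RHS: unfold cauchyPowerSeries
  have hdiff_h : DifferentiableOn ℂ h (Metric.closedBall (0:ℂ) ((1:NNReal):ℝ)) := by
    apply hg.comp ((differentiable_const _).mul differentiable_id).differentiableOn
    intro w hw
    simp only [NNReal.coe_one, mem_closedBall, dist_zero_right] at hw
    simp only [mem_ball, dist_zero_right]
    calc ‖(r:ℂ) * w‖ = r * ‖w‖ := by
          rw [norm_mul, Complex.norm_real, Real.norm_of_nonneg hr0.le]
      _ ≤ r * 1 := by exact mul_le_mul_of_nonneg_left hw hr0.le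
      _ < 1 := by linarith
  have key : (cauchyPowerSeries h 0 1).coeff j
      = (2 * Real.pi * Complex.I : ℂ)⁻¹
        • ∮ z in C(0, 1), (1 / (z - 0)) ^ j • ((z - 0)⁻¹ • h z) := by
    rw [FormalMultilinearSeries.coeff,
      show (1 : Fin j → ℂ) = fun _ => (1:ℂ) from rfl, cauchyPowerSeries_apply]
  rw [key, circleIntegral]
  have integrand_eq : ∀ θ : ℝ,
      deriv (circleMap 0 1) θ •
        ((1 / (circleMap 0 1 θ - 0)) ^ j • ((circleMap 0 1 θ - 0)⁻¹ • h (circleMap 0 1 θ)))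
      = Complex.I * ((starRingEnd ℂ (Complex.exp ((θ:ℂ) * Complex.I))) ^ j
          * h (Complex.exp ((θ:ℂ) * Complex.I))) := by
    intro θ
    have hne : Complex.exp ((θ:ℂ) * Complex.I) ≠ 0 := Complex.exp_ne_zero _
    have hconj : starRingEnd ℂ (Complex.exp ((θ:ℂ) * Complex.I))
        = (Complex.exp ((θ:ℂ) * Complex.I))⁻¹ := by
      rw [← Complex.exp_conj, ← Complex.exp_neg]
      congr 1
      simp [Complex.conj_ofReal, map_mul, Complex.conj_I]
    rw [deriv_circleMap]
    simp only [circleMap_zero, smul_eq_mul, sub_zero, one_div, Complex.ofReal_one, one_mul,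
      hconj]
    field_simp
  simp only [integrand_eq]
  rw [intervalIntegral.integral_const_mul,
    intervalIntegral.integral_of_le Real.two_pi_pos.le]
  have : (2 * Real.pi * Complex.I : ℂ)⁻¹ • (Complex.I *
      ∫ θ in Set.Ioc (0:ℝ) (2 * Real.pi),
        (starRingEnd ℂ (Complex.exp ((θ:ℂ) * Complex.I))) ^ j
          * h (Complex.exp ((θ:ℂ) * Complex.I)))
      = ((2 * Real.pi : ℝ)⁻¹ : ℂ) * ∫ θ in Set.Ioc (0:ℝ) (2 * Real.pi),
        (starRingEnd ℂ (Complex.exp ((θ:ℂ) * Complex.I))) ^ j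
          * h (Complex.exp ((θ:ℂ) * Complex.I)) := by
    rw [smul_eq_mul, ← mul_assoc]
    congr 1
    have hπ : (Real.pi : ℂ) ≠ 0 := by exact_mod_cast Real.pi_ne_zero
    field_simp
    push_cast; ring
  rw [this, Complex.real_smul]
  norm_num

end B
end Aux

namespace Aux
variable {g G : ℂ → ℂ}

noncomputable def rn (n : ℕ) : ℝ := 1 - ((n : ℝ) + 2)⁻¹

lemma rn_pos (n : ℕ) : 0 < rn n := by
  have h2 : (0:ℝ) ≤ (n:ℝ) := Nat.cast_nonneg n
  have : ((n:ℝ)+2)⁻¹ < 1 := by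
    rw [inv_lt_one_iff₀]; right; linarith
  unfold rn; linarith

lemma rn_lt_one (n : ℕ) : rn n < 1 := by
  have h3 : (0:ℝ) < ((n:ℝ) + 2)⁻¹ := by positivity
  unfold rn; linarith

lemma rn_tendsto : Tendsto rn atTop (nhdsWithin 1 (Set.Iio 1)) := by
  apply tendsto_nhdsWithin_of_tendsto_nhds_of_eventually_within
  · have h1 : Tendsto (fun n : ℕ => ((n:ℝ) + 2)) atTop atTop :=
      tendsto_atTop_add_const_right _ _ tendsto_natCast_atTop_atTop
    have h2 : Tendsto (fun n : ℕ => ((n:ℝ) + 2)⁻¹) atTop (nhds 0) :=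
      h1.inv_tendsto_atTop
    have := h2.const_sub 1
    rw [show rn = fun n : ℕ => 1 - ((n:ℝ)+2)⁻¹ from rfl]
    simpa using this
  · filter_upwards with n
    exact rn_lt_one n

lemma key_tendsto (j : ℕ)
    (hg : DifferentiableOn ℂ g (Metric.ball 0 1))
    (hb : ∀ w ∈ Metric.ball (0:ℂ) 1, ‖g w‖ ≤ 1)
    (hG : ∀ᵐ z ∂m, Tendsto (fun ρ : ℝ => g ((ρ : ℂ) * z)) (nhdsWithin 1 (Set.Iio 1))
        (nhds (G z))) :
    Tendsto (fun n => ∫ z, (starRingEnd ℂ z) ^ j * g ((rn n : ℂ) * z) ∂m) atTop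
      (nhds (∫ z, (starRingEnd ℂ z) ^ j * G z ∂m)) := by
  apply MeasureTheory.tendsto_integral_of_dominated_convergence (bound := fun _ => (1:ℝ))
  · intro n
    have hrinv : (1:ℝ) < (rn n)⁻¹ := (one_lt_inv₀ (rn_pos n)).2 (rn_lt_one n)
    apply aesm_m_of_continuousOn (measurableSet_ball (x := (0:ℂ)) (ε := (rn n)⁻¹))
    · intro z hz
      simp only [mem_sphere_iff_norm, sub_zero] at hz
      simp [mem_ball, dist_zero_right, hz, hrinv]
    · apply ((Complex.continuous_conj.pow j).continuousOn).mul
      apply hg.continuousOn.comp ((continuous_const.mul continuous_id).continuousOn)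
      intro w hw
      simp only [mem_ball, dist_zero_right] at hw ⊢
      calc ‖(rn n : ℂ) * w‖ = rn n * ‖w‖ := by
            rw [norm_mul, Complex.norm_real, Real.norm_of_nonneg (rn_pos n).le]
        _ < rn n * (rn n)⁻¹ := mul_lt_mul_of_pos_left hw (rn_pos n)
        _ = 1 := mul_inv_cancel₀ (rn_pos n).ne'
  · exact integrable_const 1
  · intro n
    filter_upwards [m_sphere] with z hz
    have hmem : (rn n : ℂ) * z ∈ Metric.ball (0:ℂ) 1 := by
      simp only [mem_ball, dist_zero_right, norm_mul, Complex.norm_real,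
        Real.norm_of_nonneg (rn_pos n).le, hz, mul_one]
      exact rn_lt_one n
    calc ‖(starRingEnd ℂ z) ^ j * g ((rn n : ℂ) * z)‖
        = ‖z‖ ^ j * ‖g ((rn n : ℂ) * z)‖ := by
          rw [norm_mul, norm_pow, RCLike.norm_conj]
      _ ≤ 1 := by rw [hz]; simpa using hb _ hmem
  · filter_upwards [hG] with z hz
    exact ((hz.comp rn_tendsto)).const_mul _

lemma boundary_integral
    (hg : DifferentiableOn ℂ g (Metric.ball 0 1))
    (hb : ∀ w ∈ Metric.ball (0:ℂ) 1, ‖g w‖ ≤ 1)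
    (hG : ∀ᵐ z ∂m, Tendsto (fun ρ : ℝ => g ((ρ : ℂ) * z)) (nhdsWithin 1 (Set.Iio 1))
        (nhds (G z))) :
    ∫ z, G z ∂m = g 0 := by
  have h0 := key_tendsto 0 hg hb hG
  simp only [pow_zero, one_mul] at h0
  have hconst : ∀ n, ∫ z, g ((rn n : ℂ) * z) ∂m = g 0 := by
    intro n
    have := radial_coeff hg (rn_pos n) (rn_lt_one n) 0
    simp only [pow_zero, one_mul] at this
    rw [this]
    have hdiff_h : DifferentiableOn ℂ (fun w => g ((rn n :ℂ) * w))
        (Metric.closedBall (0:ℂ) ((1:NNReal):ℝ)) := by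
      apply hg.comp ((differentiable_const _).mul differentiable_id).differentiableOn
      intro w hw
      simp only [NNReal.coe_one, mem_closedBall, dist_zero_right] at hw
      simp only [mem_ball, dist_zero_right]
      calc ‖(rn n:ℂ) * w‖ = rn n * ‖w‖ := by
            rw [norm_mul, Complex.norm_real, Real.norm_of_nonneg (rn_pos n).le]
        _ ≤ rn n * 1 := mul_le_mul_of_nonneg_left hw (rn_pos n).le
        _ < 1 := by have := rn_lt_one n; linarith
    have hps := hdiff_h.hasFPowerSeriesOnBall one_pos
    have h2 := hps.coeff_zero (fun _ => 1)
    simp only [NNReal.coe_one] at h2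
    have h3 : (cauchyPowerSeries (fun w => g ((rn n :ℂ) * w)) 0 1).coeff 0
        = g ((rn n : ℂ) * 0) := h2
    rw [h3]
    simp
  simp only [hconst] at h0
  exact (tendsto_nhds_unique h0 tendsto_const_nhds)

lemma boundary_integral_conj
    (hg : DifferentiableOn ℂ g (Metric.ball 0 1))
    (hb : ∀ w ∈ Metric.ball (0:ℂ) 1, ‖g w‖ ≤ 1)
    (hG : ∀ᵐ z ∂m, Tendsto (fun ρ : ℝ => g ((ρ : ℂ) * z)) (nhdsWithin 1 (Set.Iio 1))
        (nhds (G z))) :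
    ∫ z, (starRingEnd ℂ z) * G z ∂m = deriv g 0 := by
  have h0 := key_tendsto 1 hg hb hG
  simp only [pow_one] at h0
  have hconst : ∀ n, ∫ z, (starRingEnd ℂ z) * g ((rn n : ℂ) * z) ∂m
      = (rn n : ℂ) * deriv g 0 := by
    intro n
    have := radial_coeff hg (rn_pos n) (rn_lt_one n) 1
    simp only [pow_one] at this
    rw [this]
    have hdiff_h : DifferentiableOn ℂ (fun w => g ((rn n :ℂ) * w))
        (Metric.closedBall (0:ℂ) ((1:NNReal):ℝ)) := by
      apply hg.comp ((differentiable_const _).mul differentiable_id).differentiableOn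
      intro w hw
      simp only [NNReal.coe_one, mem_closedBall, dist_zero_right] at hw
      simp only [mem_ball, dist_zero_right]
      calc ‖(rn n:ℂ) * w‖ = rn n * ‖w‖ := by
            rw [norm_mul, Complex.norm_real, Real.norm_of_nonneg (rn_pos n).le]
        _ ≤ rn n * 1 := mul_le_mul_of_nonneg_left hw (rn_pos n).le
        _ < 1 := by have := rn_lt_one n; linarith
    have hps := hdiff_h.hasFPowerSeriesOnBall one_pos
    have hderiv := hps.hasFPowerSeriesAt.deriv
    simp only [NNReal.coe_one] at hderiv
    have h3 : (cauchyPowerSeries (fun w => g ((rn n :ℂ) * w)) 0 1).coeff 1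
        = deriv (fun w => g ((rn n : ℂ) * w)) 0 := hderiv.symm
    rw [h3]
    have hgd : DifferentiableAt ℂ g 0 :=
      hg.differentiableAt (isOpen_ball.mem_nhds (by simp))
    have hlin : HasDerivAt (fun w : ℂ => (rn n : ℂ) * w) (rn n : ℂ) 0 := by
      simpa using (hasDerivAt_id (0:ℂ)).const_mul (rn n : ℂ)
    have hcomp : HasDerivAt (fun w => g ((rn n : ℂ) * w)) (deriv g ((rn n:ℂ) * 0) * (rn n:ℂ)) 0 := by
      have hg0 : HasDerivAt g (deriv g ((rn n:ℂ) * 0)) ((rn n : ℂ) * 0) := by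
        simpa using hgd.hasDerivAt
      exact HasDerivAt.comp 0 hg0 hlin
    rw [hcomp.deriv]
    simp [mul_comm]
  simp only [hconst] at h0
  have h1 : Tendsto (fun n => ((rn n : ℂ)) * deriv g 0) atTop (nhds ((1:ℂ) * deriv g 0)) := by
    apply Tendsto.mul_const
    have : Tendsto rn atTop (nhds (1:ℝ)) := rn_tendsto.mono_right nhdsWithin_le_nhds
    exact (Complex.continuous_ofReal.tendsto 1).comp this
  rw [one_mul] at h1
  exact tendsto_nhds_unique h0 h1

end Aux

namespace Aux
section C
variable {f F : ℂ → ℂ}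

lemma ball_bound (hmap : Set.MapsTo f (Metric.ball 0 1) (Metric.ball 0 1)) :
    ∀ w ∈ Metric.ball (0:ℂ) 1, ‖f w‖ ≤ 1 := by
  intro w hw
  have := hmap hw
  simp only [mem_ball, dist_zero_right] at this
  exact this.le

lemma F_aesm (hf : DifferentiableOn ℂ f (Metric.ball 0 1))
    (hbd : ∀ᵐ z ∂m, Tendsto (fun r : ℝ => f ((r : ℂ) * z))
      (nhdsWithin 1 (Set.Iio 1)) (nhds (F z))) :
    AEStronglyMeasurable F m := by
  apply aestronglyMeasurable_of_tendsto_ae atTop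
    (f := fun n (z : ℂ) => f ((rn n : ℂ) * z))
  · intro n
    have hrinv : (1:ℝ) < (rn n)⁻¹ := (one_lt_inv₀ (rn_pos n)).2 (rn_lt_one n)
    apply aesm_m_of_continuousOn (measurableSet_ball (x := (0:ℂ)) (ε := (rn n)⁻¹))
    · intro z hz
      simp only [mem_sphere_iff_norm, sub_zero] at hz
      simp [mem_ball, dist_zero_right, hz, hrinv]
    · apply hf.continuousOn.comp ((continuous_const.mul continuous_id).continuousOn)
      intro w hw
      simp only [mem_ball, dist_zero_right] at hw ⊢
      calc ‖(rn n : ℂ) * w‖ = rn n * ‖w‖ := by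
            rw [norm_mul, Complex.norm_real, Real.norm_of_nonneg (rn_pos n).le]
        _ < rn n * (rn n)⁻¹ := mul_lt_mul_of_pos_left hw (rn_pos n)
        _ = 1 := mul_inv_cancel₀ (rn_pos n).ne'
  · filter_upwards [hbd] with z hz
    exact hz.comp rn_tendsto

lemma mom_pow (hf : DifferentiableOn ℂ f (Metric.ball 0 1))
    (hmap : Set.MapsTo f (Metric.ball 0 1) (Metric.ball 0 1))
    (h0 : f 0 = 0)
    (hbd : ∀ᵐ z ∂m, Tendsto (fun r : ℝ => f ((r : ℂ) * z))
      (nhdsWithin 1 (Set.Iio 1)) (nhds (F z)))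
    {k : ℕ} (hk : k ≠ 0) :
    ∫ z, (F z) ^ k ∂m = 0 := by
  have := boundary_integral (g := fun w => (f w)^k) (G := fun z => (F z)^k)
    (hf.pow k)
    (fun w hw => by
      rw [norm_pow]
      exact pow_le_one₀ (norm_nonneg _) (ball_bound hmap w hw))
    (by filter_upwards [hbd] with z hz; exact hz.pow k)
  rw [this]; simp [h0, zero_pow hk]

lemma mom_z_pow (hf : DifferentiableOn ℂ f (Metric.ball 0 1))
    (hmap : Set.MapsTo f (Metric.ball 0 1) (Metric.ball 0 1))
    (h0 : f 0 = 0)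
    (hbd : ∀ᵐ z ∂m, Tendsto (fun r : ℝ => f ((r : ℂ) * z))
      (nhdsWithin 1 (Set.Iio 1)) (nhds (F z)))
    (k : ℕ) :
    ∫ z, z * (F z) ^ k ∂m = 0 := by
  have := boundary_integral (g := fun w => w * (f w)^k) (G := fun z => z * (F z)^k)
    ((differentiable_id.differentiableOn).mul (hf.pow k))
    (fun w hw => by
      rw [norm_mul, norm_pow]
      have h1 : ‖w‖ ≤ 1 := by
        simp only [mem_ball, dist_zero_right] at hw; exact hw.le
      have h2 : ‖f w‖ ≤ 1 := ball_bound hmap w hw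
      calc ‖w‖ * ‖f w‖^k ≤ 1 * 1 := by
            apply mul_le_mul h1 (pow_le_one₀ (norm_nonneg _) h2)
              (by positivity) zero_le_one
        _ = 1 := by ring)
    (by
      filter_upwards [hbd] with z hz
      have h1 : Tendsto (fun r : ℝ => (r:ℂ) * z) (nhdsWithin 1 (Set.Iio 1)) (nhds z) := by
        have := ((Complex.continuous_ofReal.tendsto 1).mono_left
          (nhdsWithin_le_nhds (s := Set.Iio (1:ℝ)))).mul_const z
        simpa using this
      exact h1.mul (hz.pow k))
  rw [this]; simp

lemma mom_conj_pow (hf : DifferentiableOn ℂ f (Metric.ball 0 1))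
    (hmap : Set.MapsTo f (Metric.ball 0 1) (Metric.ball 0 1))
    (h0 : f 0 = 0)
    (hbd : ∀ᵐ z ∂m, Tendsto (fun r : ℝ => f ((r : ℂ) * z))
      (nhdsWithin 1 (Set.Iio 1)) (nhds (F z)))
    (k : ℕ) (hk : 1 ≤ k) :
    ∫ z, z * starRingEnd ℂ ((F z) ^ k) ∂m
      = if k = 1 then starRingEnd ℂ (deriv f 0) else 0 := by
  have key : ∫ z, starRingEnd ℂ z * (F z) ^ k ∂m = deriv (fun w => (f w)^k) 0 := by
    apply boundary_integral_conj (hf.pow k)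
      (fun w hw => by
        rw [Pi.pow_apply, norm_pow]
        exact pow_le_one₀ (norm_nonneg _) (ball_bound hmap w hw))
      (by filter_upwards [hbd] with z hz; exact hz.pow k)
  have hconj : ∫ z, z * starRingEnd ℂ ((F z) ^ k) ∂m
      = starRingEnd ℂ (∫ z, starRingEnd ℂ z * (F z) ^ k ∂m) := by
    rw [← integral_conj]
    congr 1
    funext z
    simp [map_mul]
  rw [hconj, key]
  have hfd : DifferentiableAt ℂ f 0 :=
    hf.differentiableAt (isOpen_ball.mem_nhds (by simp))
  have hder : deriv (fun w => (f w)^k) 0 = k * (f 0)^(k-1) * deriv f 0 := by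
    exact (hfd.hasDerivAt.pow k).deriv
  rw [hder, h0]
  rcases Nat.eq_or_lt_of_le hk with h1 | h1
  · rw [if_pos h1.symm, ← h1]
    simp
  · rw [if_neg (by omega)]
    rw [zero_pow (by omega)]
    simp

end C
end Aux

namespace Aux
section D

/-- trigonometric monomials -/
noncomputable def mono (p : ℕ × ℕ) : ℂ → ℂ := fun z => z ^ p.1 * (starRingEnd ℂ z) ^ p.2

/-- span of trigonometric monomials -/
noncomputable def TP : Submodule ℂ (ℂ → ℂ) := Submodule.span ℂ (Set.range mono)

lemma mono_mem (p : ℕ × ℕ) : mono p ∈ TP :=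
  Submodule.subset_span (Set.mem_range_self p)

lemma tp_cont {t : ℂ → ℂ} (ht : t ∈ TP) : Continuous t := by
  induction ht using Submodule.span_induction with
  | mem x hx =>
    obtain ⟨p, rfl⟩ := hx
    exact (continuous_pow p.1).mul (Complex.continuous_conj.pow p.2)
  | zero => exact continuous_const
  | add x y _ _ hx hy => exact hx.add hy
  | smul c x _ hx => exact continuous_const.mul hx

lemma tp_mul {t s : ℂ → ℂ} (ht : t ∈ TP) (hs : s ∈ TP) : t * s ∈ TP := by
  induction ht using Submodule.span_induction with
  | mem x hx =>
    obtain ⟨p, rfl⟩ := hx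
    induction hs using Submodule.span_induction with
    | mem y hy =>
      obtain ⟨q, rfl⟩ := hy
      have : mono p * mono q = mono (p.1 + q.1, p.2 + q.2) := by
        funext z
        simp only [mono, Pi.mul_apply]
        ring
      rw [this]
      exact mono_mem _
    | zero => simpa using Submodule.zero_mem TP
    | add x y _ _ hx hy => rw [mul_add]; exact Submodule.add_mem _ hx hy
    | smul c x _ hx =>
      rw [show mono p * (c • x) = c • (mono p * x) by funext z; simp; ring]
      exact Submodule.smul_mem _ _ hx
  | zero => simpa using Submodule.zero_mem TP
  | add x y _ _ hx hy => rw [add_mul]; exact Submodule.add_mem _ hx hy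
  | smul c x _ hx =>
    rw [show (c • x) * s = c • (x * s) by funext z; simp; ring]
    exact Submodule.smul_mem _ _ hx

lemma tp_star {t : ℂ → ℂ} (ht : t ∈ TP) : (fun z => starRingEnd ℂ (t z)) ∈ TP := by
  induction ht using Submodule.span_induction with
  | mem x hx =>
    obtain ⟨p, rfl⟩ := hx
    have : (fun z => starRingEnd ℂ (mono p z)) = mono (p.2, p.1) := by
      funext z
      simp only [mono, map_mul, map_pow, Complex.conj_conj]
      ring
    rw [this]
    exact mono_mem _
  | zero =>
    have : (fun z : ℂ => starRingEnd ℂ ((0 : ℂ → ℂ) z)) = (0 : ℂ → ℂ) := by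
      funext z; simp
    rw [this]; exact Submodule.zero_mem TP
  | add x y _ _ hx hy =>
    have : (fun z => starRingEnd ℂ ((x + y) z))
        = (fun z => starRingEnd ℂ (x z)) + (fun z => starRingEnd ℂ (y z)) := by
      funext z; simp
    rw [this]; exact Submodule.add_mem _ hx hy
  | smul c x _ hx =>
    have : (fun z => starRingEnd ℂ ((c • x) z))
        = (starRingEnd ℂ c) • (fun z => starRingEnd ℂ (x z)) := by
      funext z; simp
    rw [this]; exact Submodule.smul_mem _ _ hx

/-- Stone-Weierstrass approximation on the unit circle by trigonometric polynomials. -/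
lemma sw_approx (g : ℂ → ℂ) (hg : Continuous g) {ε : ℝ} (hε : 0 < ε) :
    ∃ t, t ∈ TP ∧ ∀ z ∈ Metric.sphere (0:ℂ) 1, ‖g z - t z‖ ≤ ε := by
  set S := Metric.sphere (0:ℂ) 1
  let ζ : C(S, ℂ) := ⟨fun z => (z : ℂ), continuous_subtype_val⟩
  let A : StarSubalgebra ℂ C(S, ℂ) := StarAlgebra.adjoin ℂ ({ζ} : Set C(S, ℂ))
  have hA : A.SeparatesPoints := by
    intro x y hxy
    refine ⟨_, ⟨ζ, ?_, rfl⟩, ?_⟩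
    · exact StarAlgebra.subset_adjoin ℂ _ (Set.mem_singleton ζ)
    · simp only [ζ, ContinuousMap.coe_mk]
      exact fun h => hxy (Subtype.ext h)
  have htop := ContinuousMap.starSubalgebra_topologicalClosure_eq_top_of_separatesPoints A hA
  -- every element of A extends to an element of TP
  have hlift : ∀ u : C(S, ℂ), u ∈ A → ∃ t, t ∈ TP ∧ ∀ z : S, t (z : ℂ) = u z := by
    intro u hu
    induction hu using StarAlgebra.adjoin_induction with
    | mem x hx =>
      rw [Set.mem_singleton_iff] at hx
      subst hx
      refine ⟨mono (1, 0), mono_mem _, ?_⟩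
      intro z; simp [mono, ζ]
    | algebraMap r =>
      refine ⟨r • mono (0, 0), Submodule.smul_mem _ _ (mono_mem _), ?_⟩
      intro z; simp [mono]
    | add x y hx hy ihx ihy =>
      obtain ⟨t₁, ht₁, he₁⟩ := ihx
      obtain ⟨t₂, ht₂, he₂⟩ := ihy
      exact ⟨t₁ + t₂, Submodule.add_mem _ ht₁ ht₂, fun z => by
        simp [he₁ z, he₂ z]⟩
    | mul x y hx hy ihx ihy =>
      obtain ⟨t₁, ht₁, he₁⟩ := ihx
      obtain ⟨t₂, ht₂, he₂⟩ := ihy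
      exact ⟨t₁ * t₂, tp_mul ht₁ ht₂, fun z => by simp [he₁ z, he₂ z]⟩
    | star x hx ihx =>
      obtain ⟨t₁, ht₁, he₁⟩ := ihx
      exact ⟨fun z => starRingEnd ℂ (t₁ z), tp_star ht₁, fun z => by
        simp [he₁ z]⟩
  -- approximate
  let gS : C(S, ℂ) := ⟨fun z => g (z : ℂ), hg.comp continuous_subtype_val⟩
  have hmem : gS ∈ A.topologicalClosure := by rw [htop]; trivial
  have hclo : gS ∈ closure (A : Set C(S, ℂ)) := hmem
  rw [Metric.mem_closure_iff] at hclo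
  obtain ⟨u, huA, hdist⟩ := hclo (ε/2) (by positivity)
  obtain ⟨t, htTP, hext⟩ := hlift u huA
  refine ⟨t, htTP, ?_⟩
  intro z hz
  have h1 : ‖gS ⟨z, hz⟩ - u ⟨z, hz⟩‖ ≤ ε/2 := by
    have hd := ContinuousMap.dist_apply_le_dist (f := gS) (g := u) (⟨z, hz⟩ : S)
    rw [dist_eq_norm] at hd
    linarith [hdist]
  have h2 : t z = u ⟨z, hz⟩ := hext ⟨z, hz⟩
  have h3 : g z = gS ⟨z, hz⟩ := rfl
  rw [h3, h2]
  linarith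

end D
end Aux

namespace Aux
section E

structure Inner (f F : ℂ → ℂ) : Prop where
  hf : DifferentiableOn ℂ f (Metric.ball 0 1)
  hmap : Set.MapsTo f (Metric.ball 0 1) (Metric.ball 0 1)
  h0 : f 0 = 0
  hbd : ∀ᵐ z ∂m, Tendsto (fun r : ℝ => f ((r : ℂ) * z))
      (nhdsWithin 1 (Set.Iio 1)) (nhds (F z))
  hinner : ∀ᵐ z ∂m, ‖F z‖ = 1

variable {f F : ℂ → ℂ}

lemma integrable_of_bound {u : ℂ → ℂ} (hu : AEStronglyMeasurable u m) {C : ℝ}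
    (hb : ∀ᵐ z ∂m, ‖u z‖ ≤ C) : Integrable u m :=
  Integrable.mono' (integrable_const C) hu hb

lemma unit_mul_conj {u : ℂ} (hu : ‖u‖ = 1) : u * starRingEnd ℂ u = 1 := by
  rw [Complex.mul_conj]
  norm_cast
  rw [Complex.normSq_eq_norm_sq]
  rw [hu]
  norm_num

lemma unit_pow_conj {u : ℂ} (hu : ‖u‖ = 1) (i k : ℕ) :
    u ^ i * (starRingEnd ℂ u) ^ k
      = if k ≤ i then u ^ (i - k) else (starRingEnd ℂ u) ^ (k - i) := by
  have h1 := unit_mul_conj hu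
  rcases le_or_gt k i with h | h
  · rw [if_pos h]
    have : u ^ i = u ^ (i - k) * u ^ k := by rw [← pow_add]; congr 1; omega
    rw [this, mul_assoc, ← mul_pow, h1, one_pow, mul_one]
  · rw [if_neg (not_le.2 h)]
    have : (starRingEnd ℂ u) ^ k
        = (starRingEnd ℂ u) ^ i * (starRingEnd ℂ u) ^ (k - i) := by
      rw [← pow_add]; congr 1; omega
    rw [this, ← mul_assoc, ← mul_pow, h1, one_pow, one_mul]

lemma F_aesm' (h : Inner f F) : AEStronglyMeasurable F m := F_aesm h.hf h.hbd

lemma conjF_aesm (h : Inner f F) : AEStronglyMeasurable (fun z => starRingEnd ℂ (F z)) m :=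
  Complex.continuous_conj.comp_aestronglyMeasurable (F_aesm' h)

lemma momF_monomial (h : Inner f F) (i k : ℕ) :
    ∫ z, (F z) ^ i * (starRingEnd ℂ (F z)) ^ k ∂m = if i = k then 1 else 0 := by
  have hae : (fun z => (F z) ^ i * (starRingEnd ℂ (F z)) ^ k)
      =ᵐ[m] (fun z => if k ≤ i then (F z) ^ (i - k) else (starRingEnd ℂ (F z)) ^ (k - i)) := by
    filter_upwards [h.hinner] with z hz
    exact unit_pow_conj hz i k
  rw [integral_congr_ae hae]
  rcases le_or_gt k i with hki | hki
  · simp only [if_pos hki]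
    rcases Nat.eq_or_lt_of_le hki with he | hlt
    · subst he
      simp only [Nat.sub_self, pow_zero, if_pos rfl]
      simpa using (measure_univ (μ := m))
    · rw [if_neg (by omega)]
      exact mom_pow h.hf h.hmap h.h0 h.hbd (by omega)
  · simp only [if_neg (not_le.2 hki), if_neg (by omega : ¬ i = k)]
    have : ∫ z, (starRingEnd ℂ (F z)) ^ (k - i) ∂m
        = starRingEnd ℂ (∫ z, (F z) ^ (k - i) ∂m) := by
      rw [← integral_conj]
      congr 1; funext z; simp
    rw [this, mom_pow h.hf h.hmap h.h0 h.hbd (by omega : k - i ≠ 0), map_zero]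

lemma momF_z_monomial (h : Inner f F) (i k : ℕ) :
    ∫ z, z * ((F z) ^ i * (starRingEnd ℂ (F z)) ^ k) ∂m
      = starRingEnd ℂ (deriv f 0) * (if i + 1 = k then 1 else 0) := by
  have hae : (fun z => z * ((F z) ^ i * (starRingEnd ℂ (F z)) ^ k))
      =ᵐ[m] (fun z => z * (if k ≤ i then (F z) ^ (i - k)
          else (starRingEnd ℂ (F z)) ^ (k - i))) := by
    filter_upwards [h.hinner] with z hz
    rw [unit_pow_conj hz i k]
  rw [integral_congr_ae hae]
  rcases le_or_gt k i with hki | hki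
  · simp only [if_pos hki]
    rw [if_neg (by omega : ¬ i + 1 = k), mul_zero]
    exact mom_z_pow h.hf h.hmap h.h0 h.hbd (i - k)
  · simp only [if_neg (not_le.2 hki)]
    have heq : (fun z : ℂ => z * (starRingEnd ℂ (F z)) ^ (k - i))
        = (fun z : ℂ => z * starRingEnd ℂ ((F z) ^ (k - i))) := by
      funext z; rw [map_pow]
    rw [heq, mom_conj_pow h.hf h.hmap h.h0 h.hbd (k - i) (by omega)]
    by_cases hk1 : k - i = 1
    · rw [if_pos hk1, if_pos (by omega), mul_one]
    · rw [if_neg hk1, if_neg (by omega), mul_zero]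

lemma tp_integral_id (h : Inner f F) {t : ℂ → ℂ} (ht : t ∈ TP) :
    Integrable (fun z => t (F z)) m ∧ Integrable t m ∧
      ∫ z, t (F z) ∂m = ∫ z, t z ∂m := by
  induction ht using Submodule.span_induction with
  | mem x hx =>
    obtain ⟨p, rfl⟩ := hx
    have haesm : AEStronglyMeasurable (fun z => mono p (F z)) m := by
      unfold mono
      exact ((F_aesm' h).pow p.1).mul ((conjF_aesm h).pow p.2)
    have haesm2 : AEStronglyMeasurable (mono p) m :=
      (tp_cont (mono_mem p)).aestronglyMeasurable
    refine ⟨integrable_of_bound haesm (C := 1) ?_, integrable_of_bound haesm2 (C := 1) ?_, ?_⟩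
    · filter_upwards [h.hinner] with z hz
      unfold mono
      rw [norm_mul, norm_pow, norm_pow, RCLike.norm_conj, hz]
      simp
    · filter_upwards [m_sphere] with z hz
      unfold mono
      rw [norm_mul, norm_pow, norm_pow, RCLike.norm_conj, hz]
      simp
    · unfold mono
      rw [momF_monomial h p.1 p.2, integral_monomial p.1 p.2]
  | zero =>
    refine ⟨?_, ?_, by simp⟩
    · exact integrable_zero _ _ _
    · exact integrable_zero _ _ _
  | add x y hx hy ihx ihy =>
    refine ⟨ihx.1.add ihy.1, ihx.2.1.add ihy.2.1, ?_⟩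
    have e1 : ∫ z, (x + y) (F z) ∂m = ∫ z, (x (F z) + y (F z)) ∂m := rfl
    have e2 : ∫ z, (x + y) z ∂m = ∫ z, (x z + y z) ∂m := rfl
    rw [e1, e2, integral_add ihx.1 ihy.1, integral_add ihx.2.1 ihy.2.1, ihx.2.2, ihy.2.2]
  | smul c x hx ihx =>
    refine ⟨?_, ?_, ?_⟩
    · have : (fun z => (c • x) (F z)) = c • (fun z => x (F z)) := rfl
      rw [this]; exact ihx.1.smul c
    · exact ihx.2.1.smul c
    · have e1 : (fun z => (c • x) (F z)) = fun z => c * x (F z) := rfl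
      have e2 : (fun z => (c • x) z) = fun z => c * x z := rfl
      rw [e1, e2, integral_const_mul, integral_const_mul, ihx.2.2]

lemma eq_of_forall_norm_sub_le {a b : ℂ} (hab : ∀ ε : ℝ, 0 < ε → ‖a - b‖ ≤ ε) : a = b := by
  by_contra hne
  have hpos : 0 < ‖a - b‖ := by
    rw [norm_pos_iff]
    exact sub_ne_zero.2 hne
  have := hab (‖a - b‖ / 2) (by positivity)
  linarith

lemma integral_comp_F (h : Inner f F) (g : ℂ → ℂ) (hg : Continuous g)
    {C : ℝ} (hC : ∀ z, ‖g z‖ ≤ C) :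
    ∫ z, g (F z) ∂m = ∫ z, g z ∂m := by
  apply eq_of_forall_norm_sub_le
  intro ε hε
  obtain ⟨t, htTP, happrox⟩ := sw_approx g hg (half_pos hε)
  obtain ⟨hint1, hint2, hid⟩ := tp_integral_id h htTP
  have hgF_int : Integrable (fun z => g (F z)) m := by
    apply integrable_of_bound (hg.comp_aestronglyMeasurable (F_aesm' h)) (C := C)
    filter_upwards with z using hC _
  have hg_int : Integrable g m := by
    apply integrable_of_bound hg.aestronglyMeasurable (C := C)
    filter_upwards with z using hC _
  have est1 : ‖(∫ z, g (F z) ∂m) - ∫ z, t (F z) ∂m‖ ≤ ε / 2 := by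
    rw [← integral_sub hgF_int hint1]
    have : ∫ z, (ε/2 : ℝ) ∂m = ε/2 := by simp
    rw [← this]
    apply norm_integral_le_of_norm_le (integrable_const _)
    filter_upwards [h.hinner] with z hz
    exact happrox (F z) (by simp [mem_sphere_iff_norm, hz])
  have est2 : ‖(∫ z, t z ∂m) - ∫ z, g z ∂m‖ ≤ ε / 2 := by
    rw [← integral_sub hint2 hg_int]
    have : ∫ z, (ε/2 : ℝ) ∂m = ε/2 := by simp
    rw [← this]
    apply norm_integral_le_of_norm_le (integrable_const _)
    filter_upwards [m_sphere] with z hz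
    rw [norm_sub_rev]
    exact happrox z (by simp [mem_sphere_iff_norm, hz])
  calc ‖(∫ z, g (F z) ∂m) - ∫ z, g z ∂m‖
      = ‖((∫ z, g (F z) ∂m) - ∫ z, t (F z) ∂m)
          + ((∫ z, t z ∂m) - ∫ z, g z ∂m)‖ := by rw [hid]; ring_nf
    _ ≤ ‖(∫ z, g (F z) ∂m) - ∫ z, t (F z) ∂m‖
          + ‖(∫ z, t z ∂m) - ∫ z, g z ∂m‖ := norm_add_le _ _
    _ ≤ ε/2 + ε/2 := add_le_add est1 est2
    _ = ε := by ring

lemma map_F_eq (h : Inner f F) : Measure.map F m = m := by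
  have hFae : AEMeasurable F m := (F_aesm' h).aemeasurable
  haveI : IsFiniteMeasure (Measure.map F m) := by
    constructor
    rw [Measure.map_apply_of_aemeasurable hFae MeasurableSet.univ]
    simp
  apply MeasureTheory.ext_of_forall_lintegral_eq_of_IsFiniteMeasure
  intro φ
  have hmeas : Measurable fun z : ℂ => ((φ z : ENNReal)) :=
    measurable_coe_nnreal_ennreal.comp (map_continuous φ).measurable
  rw [lintegral_map' hmeas.aemeasurable hFae]
  obtain ⟨C, hC⟩ := φ.bounded
  set Cb : ℝ := ((φ 0 : ℝ)) + C with hCbdef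
  have hboundR : ∀ w : ℂ, ((φ w : ℝ)) ≤ Cb := by
    intro w
    have h1 := hC w 0
    rw [NNReal.dist_eq] at h1
    have h2 := abs_le.1 h1
    rw [hCbdef]
    linarith [h2.2]
  have hbound : ∀ w : ℂ, ‖(((φ w : ℝ)) : ℂ)‖ ≤ Cb := by
    intro w
    rw [Complex.norm_real, Real.norm_of_nonneg (by positivity)]
    exact hboundR w
  have hcont : Continuous fun w : ℂ => (((φ w : ℝ)) : ℂ) :=
    Complex.continuous_ofReal.comp (NNReal.continuous_coe.comp (map_continuous φ))
  have hcplx := integral_comp_F h _ hcont hbound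
  have hreal : ∫ z, ((φ (F z) : ℝ)) ∂m = ∫ z, ((φ z : ℝ)) ∂m := by
    have e1 := Complex.ofRealLI.integral_comp_comm (μ := m) (fun z => ((φ (F z)) : ℝ))
    have e2 := Complex.ofRealLI.integral_comp_comm (μ := m) (fun z => ((φ z) : ℝ))
    have e3 : (Complex.ofRealLI : ℝ → ℂ) = Complex.ofReal := rfl
    apply Complex.ofReal_injective
    calc (↑(∫ z, ((φ (F z)) : ℝ) ∂m) : ℂ)
        = Complex.ofRealLI (∫ z, ((φ (F z)) : ℝ) ∂m) := rfl
      _ = ∫ z, Complex.ofRealLI ((φ (F z)) : ℝ) ∂m := e1.symm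
      _ = ∫ z, ((((φ (F z)) : ℝ)) : ℂ) ∂m := by simp only [e3]
      _ = ∫ z, ((((φ z) : ℝ)) : ℂ) ∂m := hcplx
      _ = ∫ z, Complex.ofRealLI ((φ z) : ℝ) ∂m := by simp only [e3]
      _ = Complex.ofRealLI (∫ z, ((φ z) : ℝ) ∂m) := e2
      _ = (↑(∫ z, ((φ z) : ℝ) ∂m) : ℂ) := rfl
  have hint1 : Integrable (fun z => ((φ (F z) : ℝ))) m := by
    apply Integrable.mono' (integrable_const Cb)
    · exact (NNReal.continuous_coe.comp (map_continuous φ)).comp_aestronglyMeasurable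
        (F_aesm' h)
    · filter_upwards with z
      rw [Real.norm_of_nonneg (by positivity)]
      exact hboundR _
  have hint2 : Integrable (fun z => ((φ z : ℝ))) m := by
    apply Integrable.mono' (integrable_const Cb)
    · exact (NNReal.continuous_coe.comp (map_continuous φ)).aestronglyMeasurable
    · filter_upwards with z
      rw [Real.norm_of_nonneg (by positivity)]
      exact hboundR _
  calc ∫⁻ z, ((φ (F z) : ENNReal)) ∂m
      = ∫⁻ z, ENNReal.ofReal ((φ (F z) : ℝ)) ∂m := by
        simp [ENNReal.ofReal_coe_nnreal]
    _ = ENNReal.ofReal (∫ z, ((φ (F z) : ℝ)) ∂m) :=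
        (ofReal_integral_eq_lintegral_ofReal hint1
          (by filter_upwards with z using by positivity)).symm
    _ = ENNReal.ofReal (∫ z, ((φ z : ℝ)) ∂m) := by rw [hreal]
    _ = ∫⁻ z, ENNReal.ofReal ((φ z : ℝ)) ∂m :=
        ofReal_integral_eq_lintegral_ofReal hint2
          (by filter_upwards with z using by positivity)
    _ = ∫⁻ z, ((φ z : ENNReal)) ∂m := by
        simp [ENNReal.ofReal_coe_nnreal]

end E
end Aux

namespace Aux
section F
variable {f F : ℂ → ℂ}

lemma iter_basic (h : Inner f F) :
    ∀ n : ℕ, AEMeasurable (F^[n]) m ∧ Measure.map (F^[n]) m = m := by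
  intro n
  induction n with
  | zero => exact ⟨aemeasurable_id, by simp⟩
  | succ n ih =>
    obtain ⟨ham, hmapn⟩ := ih
    have hFae : AEMeasurable F m := (F_aesm' h).aemeasurable
    have ham' : AEMeasurable (F^[n]) (Measure.map F m) := by rw [map_F_eq h]; exact ham
    have h1 : F^[n+1] = F^[n] ∘ F := Function.iterate_succ F n
    constructor
    · rw [h1]
      exact ham'.comp_aemeasurable hFae
    · rw [h1, ← AEMeasurable.map_map_of_aemeasurable ham' hFae, map_F_eq h, hmapn]

lemma comp_aesm (h : Inner f F) {ψ : ℂ → ℂ} (hψ : AEStronglyMeasurable ψ m) (n : ℕ) :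
    AEStronglyMeasurable (fun z => ψ (F^[n] z)) m := by
  have h1 : AEStronglyMeasurable ψ (Measure.map (F^[n]) m) := by
    rw [(iter_basic h n).2]; exact hψ
  exact h1.comp_aemeasurable (iter_basic h n).1

lemma comp_ae (h : Inner f F) {p : ℂ → Prop} (hp : ∀ᵐ z ∂m, p z) (n : ℕ) :
    ∀ᵐ z ∂m, p (F^[n] z) := by
  apply ae_of_ae_map (iter_basic h n).1
  rw [(iter_basic h n).2]
  exact hp

lemma iter_norm_one (h : Inner f F) (n : ℕ) : ∀ᵐ z ∂m, ‖F^[n] z‖ = 1 :=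
  comp_ae h m_sphere n

lemma iter_aesm (h : Inner f F) (n : ℕ) : AEStronglyMeasurable (F^[n]) m := by
  have := comp_aesm h (aestronglyMeasurable_id (μ := m)) n
  simpa using this

lemma comp_integral {E : Type*} [NormedAddCommGroup E] [NormedSpace ℝ E]
    (h : Inner f F) {ψ : ℂ → E} (hψ : AEStronglyMeasurable ψ m) (n : ℕ) :
    ∫ z, ψ (F^[n] z) ∂m = ∫ z, ψ z ∂m := by
  conv_rhs => rw [← (iter_basic h n).2]
  rw [integral_map (iter_basic h n).1]
  rw [(iter_basic h n).2]
  exact hψ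

/-- the key conditional-expectation identity, one step -/
lemma CE1 (h : Inner f F) {ψ : ℂ → ℂ} (hψm : AEStronglyMeasurable ψ m)
    (hψb : ∀ᵐ z ∂m, ‖ψ z‖ ≤ 1) :
    ∫ z, z * ψ (F z) ∂m = starRingEnd ℂ (deriv f 0) * ∫ z, z * ψ z ∂m := by
  set γ : ℂ := starRingEnd ℂ (deriv f 0) with hγdef
  -- identity for trigonometric polynomials
  have tp_ce : ∀ t ∈ TP, Integrable (fun z => z * t (F z)) m
      ∧ Integrable (fun z => z * t z) m
      ∧ ∫ z, z * t (F z) ∂m = γ * ∫ z, z * t z ∂m := by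
    intro t ht
    induction ht using Submodule.span_induction with
    | mem x hx =>
      obtain ⟨p, rfl⟩ := hx
      have haesm : AEStronglyMeasurable (fun z => z * mono p (F z)) m := by
        unfold mono
        exact aestronglyMeasurable_id.mul
          (((F_aesm' h).pow p.1).mul ((conjF_aesm h).pow p.2))
      have haesm2 : AEStronglyMeasurable (fun z => z * mono p z) m :=
        aestronglyMeasurable_id.mul (tp_cont (mono_mem p)).aestronglyMeasurable
      refine ⟨integrable_of_bound haesm (C := 1) ?_,
        integrable_of_bound haesm2 (C := 1) ?_, ?_⟩
      · filter_upwards [h.hinner, m_sphere] with z hz hz2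
        unfold mono
        rw [norm_mul, norm_mul, norm_pow, norm_pow, RCLike.norm_conj, hz, hz2]
        simp
      · filter_upwards [m_sphere] with z hz
        unfold mono
        rw [norm_mul, norm_mul, norm_pow, norm_pow, RCLike.norm_conj, hz]
        simp
      · have e1 : ∫ z, z * mono p z ∂m = if p.1 + 1 = p.2 then 1 else 0 := by
          have : (fun z : ℂ => z * mono p z)
              = (fun z : ℂ => z ^ (p.1 + 1) * (starRingEnd ℂ z) ^ p.2) := by
            funext z; unfold mono; ring
          rw [this, integral_monomial]
        rw [e1]
        have e2 := momF_z_monomial h p.1 p.2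
        unfold mono
        exact e2
    | zero => refine ⟨by simpa using integrable_zero ℂ ℂ m, by simpa using integrable_zero ℂ ℂ m, by simp⟩
    | add x y hx hy ihx ihy =>
      refine ⟨?_, ?_, ?_⟩
      · have : (fun z => z * (x + y) (F z))
            = fun z => z * x (F z) + z * y (F z) := by funext z; simp [Pi.add_apply]; ring
        rw [this]; exact ihx.1.add ihy.1
      · have : (fun z => z * (x + y) z)
            = fun z => z * x z + z * y z := by funext z; simp [Pi.add_apply]; ring
        rw [this]; exact ihx.2.1.add ihy.2.1
      · have e1 : ∫ z, z * (x + y) (F z) ∂m = ∫ z, (z * x (F z) + z * y (F z)) ∂m := by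
          congr 1; funext z; simp [Pi.add_apply]; ring
        have e2 : ∫ z, z * (x + y) z ∂m = ∫ z, (z * x z + z * y z) ∂m := by
          congr 1; funext z; simp [Pi.add_apply]; ring
        rw [e1, e2, integral_add ihx.1 ihy.1, integral_add ihx.2.1 ihy.2.1,
          ihx.2.2, ihy.2.2]
        ring
    | smul c x hx ihx =>
      refine ⟨?_, ?_, ?_⟩
      · have : (fun z => z * (c • x) (F z)) = c • fun z => z * x (F z) := by
          funext z; simp [Pi.smul_apply, smul_eq_mul]; ring
        rw [this]; exact ihx.1.smul c
      · have : (fun z => z * (c • x) z) = c • fun z => z * x z := by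
          funext z; simp [Pi.smul_apply, smul_eq_mul]; ring
        rw [this]; exact ihx.2.1.smul c
      · have e1 : ∫ z, z * (c • x) (F z) ∂m = ∫ z, c * (z * x (F z)) ∂m := by
          congr 1; funext z; simp [Pi.smul_apply, smul_eq_mul]; ring
        have e2 : ∫ z, z * (c • x) z ∂m = ∫ z, c * (z * x z) ∂m := by
          congr 1; funext z; simp [Pi.smul_apply, smul_eq_mul]; ring
        rw [e1, e2, integral_const_mul, integral_const_mul, ihx.2.2]
        ring
  -- integrability of the two sides
  have hψF_aesm : AEStronglyMeasurable (fun z => ψ (F z)) m := by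
    have := comp_aesm h hψm 1
    simpa using this
  have hψF_b : ∀ᵐ z ∂m, ‖ψ (F z)‖ ≤ 1 := by
    have := comp_ae h hψb 1
    simpa using this
  have hint1 : Integrable (fun z => z * ψ (F z)) m := by
    apply integrable_of_bound (aestronglyMeasurable_id.mul hψF_aesm) (C := 1)
    filter_upwards [m_sphere, hψF_b] with z h1 h2
    simp only [Pi.mul_apply, id_eq]
    rw [norm_mul, h1, one_mul]; exact h2
  have hint2 : Integrable (fun z => z * ψ z) m := by
    apply integrable_of_bound (aestronglyMeasurable_id.mul hψm) (C := 1)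
    filter_upwards [m_sphere, hψb] with z h1 h2
    simp only [Pi.mul_apply, id_eq]
    rw [norm_mul, h1, one_mul]; exact h2
  have hψint : Integrable ψ m := integrable_of_bound hψm hψb
  -- epsilon argument
  apply eq_of_forall_norm_sub_le
  intro ε hε
  have hγpos : (0:ℝ) < 1 + ‖γ‖ := by positivity
  set ε₀ : ℝ := ε / (2 * (1 + ‖γ‖)) with hε₀def
  have hε₀ : 0 < ε₀ := by positivity
  obtain ⟨gc, _, hgc_close, hgc_cont, hgc_int⟩ :=
    hψint.exists_hasCompactSupport_integral_sub_le hε₀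
  obtain ⟨t, htTP, happrox⟩ := sw_approx gc hgc_cont hε₀
  obtain ⟨hTint1, hTint2, hTid⟩ := tp_ce t htTP
  have htcont : Continuous t := tp_cont htTP
  obtain ⟨Ct, hCt⟩ := (isCompact_sphere (0:ℂ) 1).exists_bound_of_continuousOn
    htcont.continuousOn
  have htint : Integrable t m := by
    apply integrable_of_bound htcont.aestronglyMeasurable (C := Ct)
    filter_upwards [m_sphere] with z hz
    exact hCt z (by simp [mem_sphere_iff_norm, hz])
  -- ∫ ‖ψ - t‖ ≤ 2 ε₀
  have i1 : Integrable (fun z => ‖ψ z - gc z‖) m := by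
    simpa using (hψint.sub hgc_int).norm
  have i2 : Integrable (fun z => ‖gc z - t z‖) m := by
    simpa using (hgc_int.sub htint).norm
  have i3 : Integrable (fun z => ‖ψ z - t z‖) m := by
    simpa using (hψint.sub htint).norm
  have hδ : ∫ z, ‖ψ z - t z‖ ∂m ≤ 2 * ε₀ := by
    have h3 : ∫ z, ‖gc z - t z‖ ∂m ≤ ε₀ := by
      have : ∫ z, (ε₀ : ℝ) ∂m = ε₀ := by simp
      rw [← this]
      apply integral_mono_ae i2 (integrable_const _)
      filter_upwards [m_sphere] with z hz
      exact happrox z (by simp [mem_sphere_iff_norm, hz])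
    have h1 : ∫ z, ‖ψ z - t z‖ ∂m
        ≤ ∫ z, (‖ψ z - gc z‖ + ‖gc z - t z‖) ∂m := by
      apply integral_mono_ae i3 (i1.add i2)
      filter_upwards with z
      calc ‖ψ z - t z‖ = ‖(ψ z - gc z) + (gc z - t z)‖ := by ring_nf
        _ ≤ ‖ψ z - gc z‖ + ‖gc z - t z‖ := norm_add_le _ _
    rw [integral_add i1 i2] at h1
    linarith
  -- transfer along F
  have htF_int : Integrable (fun z => t (F z)) m := (tp_integral_id h htTP).1
  have hψFint : Integrable (fun z => ψ (F z)) m := integrable_of_bound hψF_aesm hψF_b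
  have hδF : ∫ z, ‖ψ (F z) - t (F z)‖ ∂m = ∫ z, ‖ψ z - t z‖ ∂m := by
    have haesm : AEStronglyMeasurable (fun z => ‖ψ z - t z‖) m :=
      (hψm.sub htcont.aestronglyMeasurable).norm
    have := comp_integral h haesm 1
    simpa using this
  have est1 : ‖(∫ z, z * ψ (F z) ∂m) - ∫ z, z * t (F z) ∂m‖ ≤ 2 * ε₀ := by
    rw [← integral_sub hint1 hTint1]
    calc ‖∫ z, (z * ψ (F z) - z * t (F z)) ∂m‖
        ≤ ∫ z, ‖ψ (F z) - t (F z)‖ ∂m := by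
          apply norm_integral_le_of_norm_le
            (by simpa using (hψFint.sub htF_int).norm)
          filter_upwards [m_sphere] with z hz
          rw [show z * ψ (F z) - z * t (F z) = z * (ψ (F z) - t (F z)) by ring,
            norm_mul, hz, one_mul]
      _ = ∫ z, ‖ψ z - t z‖ ∂m := hδF
      _ ≤ 2 * ε₀ := hδ
  have est2 : ‖(∫ z, z * t z ∂m) - ∫ z, z * ψ z ∂m‖ ≤ 2 * ε₀ := by
    rw [← integral_sub hTint2 hint2]
    calc ‖∫ z, (z * t z - z * ψ z) ∂m‖
        ≤ ∫ z, ‖ψ z - t z‖ ∂m := by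
          apply norm_integral_le_of_norm_le (by simpa using (hψint.sub htint).norm)
          filter_upwards [m_sphere] with z hz
          rw [show z * t z - z * ψ z = z * (t z - ψ z) by ring,
            norm_mul, hz, one_mul, norm_sub_rev]
      _ ≤ 2 * ε₀ := hδ
  calc ‖(∫ z, z * ψ (F z) ∂m) - γ * ∫ z, z * ψ z ∂m‖
      = ‖((∫ z, z * ψ (F z) ∂m) - ∫ z, z * t (F z) ∂m)
          + γ * ((∫ z, z * t z ∂m) - ∫ z, z * ψ z ∂m)‖ := by
        rw [hTid]; congr 1; ring
    _ ≤ ‖(∫ z, z * ψ (F z) ∂m) - ∫ z, z * t (F z) ∂m‖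
        + ‖γ‖ * ‖(∫ z, z * t z ∂m) - ∫ z, z * ψ z ∂m‖ := by
        refine (norm_add_le _ _).trans ?_
        rw [norm_mul]
    _ ≤ 2 * ε₀ + ‖γ‖ * (2 * ε₀) := by
        refine add_le_add est1 ?_
        exact mul_le_mul_of_nonneg_left est2 (norm_nonneg _)
    _ = ε := by
        rw [hε₀def]
        field_simp

end F
end Aux

namespace Aux
section G
variable {f F : ℂ → ℂ}

lemma CE_iter (h : Inner f F) (e : ℕ) {ψ : ℂ → ℂ} (hψm : AEStronglyMeasurable ψ m)
    (hψb : ∀ᵐ z ∂m, ‖ψ z‖ ≤ 1) :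
    ∫ z, z * ψ (F^[e] z) ∂m = (starRingEnd ℂ (deriv f 0))^e * ∫ z, z * ψ z ∂m := by
  induction e with
  | zero => simp
  | succ e ih =>
    have e1 : ∫ z, z * ψ (F^[e+1] z) ∂m
        = ∫ z, z * (fun w => ψ (F^[e] w)) (F z) ∂m := rfl
    rw [e1, CE1 h (comp_aesm h hψm e) (comp_ae h hψb e), ih]
    ring

lemma CE_iter_conj (h : Inner f F) (e : ℕ) {ψ : ℂ → ℂ} (hψm : AEStronglyMeasurable ψ m)
    (hψb : ∀ᵐ z ∂m, ‖ψ z‖ ≤ 1) :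
    ∫ z, starRingEnd ℂ z * ψ (F^[e] z) ∂m
      = (deriv f 0)^e * ∫ z, starRingEnd ℂ z * ψ z ∂m := by
  have hcm : AEStronglyMeasurable (fun w => starRingEnd ℂ (ψ w)) m :=
    Complex.continuous_conj.comp_aestronglyMeasurable hψm
  have hcb : ∀ᵐ z ∂m, ‖starRingEnd ℂ (ψ z)‖ ≤ 1 := by
    filter_upwards [hψb] with z hz
    rwa [RCLike.norm_conj]
  have h1 := CE_iter h e hcm hcb
  have e1 : ∫ z, starRingEnd ℂ z * ψ (F^[e] z) ∂m
      = starRingEnd ℂ (∫ z, z * starRingEnd ℂ (ψ (F^[e] z)) ∂m) := by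
    rw [← integral_conj]
    congr 1; funext z; simp
  have e2 : ∫ z, starRingEnd ℂ z * ψ z ∂m
      = starRingEnd ℂ (∫ z, z * starRingEnd ℂ (ψ z) ∂m) := by
    rw [← integral_conj]
    congr 1; funext z; simp
  rw [e1, h1, e2, map_mul, map_pow, Complex.conj_conj]

lemma int_z_iter (h : Inner f F) (s : ℕ) : ∫ z, z * F^[s] z ∂m = 0 := by
  induction s with
  | zero =>
    have e1 : (fun z : ℂ => z * F^[0] z) = fun z : ℂ => z^2 * (starRingEnd ℂ z)^0 := by
      funext z; simp [pow_two]
    rw [e1, integral_monomial]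
    simp
  | succ s ih =>
    have e1 : ∫ z, z * F^[s+1] z ∂m = ∫ z, z * (F^[s]) (F z) ∂m := rfl
    have hb : ∀ᵐ z ∂m, ‖F^[s] z‖ ≤ 1 := by
      filter_upwards [iter_norm_one h s] with z hz
      exact hz.le
    rw [e1, CE1 h (iter_aesm h s) hb, ih, mul_zero]

lemma NN_le (h : Inner f F) {p q : ℕ} (hpq : p ≤ q) :
    ∫ z, F^[p] z * F^[q] z ∂m = 0 := by
  have e1 : (fun z => F^[p] z * F^[q] z)
      = (fun z => (fun w => w * F^[q-p] w) (F^[p] z)) := by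
    funext z
    have : F^[q] z = F^[q-p] (F^[p] z) := by
      conv_lhs => rw [show q = (q - p) + p by omega]
      exact Function.iterate_add_apply F (q-p) p z
    rw [this]
  rw [e1, comp_integral h (ψ := fun w => w * F^[q-p] w)
    (aestronglyMeasurable_id.mul (iter_aesm h (q-p))) p]
  exact int_z_iter h (q-p)

lemma NN (h : Inner f F) (p q : ℕ) : ∫ z, F^[p] z * F^[q] z ∂m = 0 := by
  rcases le_or_gt p q with hpq | hpq
  · exact NN_le h hpq
  · have := NN_le h hpq.le
    rw [← this]
    congr 1; funext z; ring

lemma main_int (h : Inner f F) {a b p q : ℕ} (ha : 1 ≤ a) (hb : 1 ≤ b)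
    (hpa : a < p) (hpb : b < p) (hqa : a < q) (hqb : b < q) :
    ∫ z, F^[a] z * starRingEnd ℂ (F^[b] z) * F^[p] z * F^[q] z ∂m = 0 := by
  have hiter : ∀ (k j : ℕ), j ≤ k → ∀ z : ℂ, F^[k] z = F^[k-j] (F^[j] z) := by
    intro k j hjk z
    conv_lhs => rw [show k = (k - j) + j by omega]
    exact Function.iterate_add_apply F (k-j) j z
  rcases le_or_gt b a with hba | hab
  · -- b ≤ a : condition on F^[b]
    set Φ : ℂ → ℂ := fun w => F^[a-b] w * starRingEnd ℂ w * F^[p-b] w * F^[q-b] w with hΦ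
    have e1 : (fun z => F^[a] z * starRingEnd ℂ (F^[b] z) * F^[p] z * F^[q] z)
        = fun z => Φ (F^[b] z) := by
      funext z
      rw [hΦ]
      simp only
      rw [← hiter a b hba z, ← hiter p b hpb.le z, ← hiter q b hqb.le z]
    have hΦm : AEStronglyMeasurable Φ m := by
      rw [hΦ]
      exact (((iter_aesm h (a-b)).mul
        Complex.continuous_conj.aestronglyMeasurable).mul (iter_aesm h (p-b))).mul
        (iter_aesm h (q-b))
    rw [e1, comp_integral h hΦm b]
    rcases Nat.eq_or_lt_of_le hba with heq | hlt
    · -- a = b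
      have e2 : Φ =ᵐ[m] fun w => F^[p-b] w * F^[q-b] w := by
        filter_upwards [m_sphere] with w hw
        rw [hΦ]
        simp only
        rw [show a - b = 0 by omega, Function.iterate_zero_apply]
        rw [show w * starRingEnd ℂ w * F^[p-b] w * F^[q-b] w
          = (w * starRingEnd ℂ w) * (F^[p-b] w * F^[q-b] w) by ring,
          unit_mul_conj hw, one_mul]
      rw [integral_congr_ae e2]
      exact NN h (p-b) (q-b)
    · -- b < a
      set e : ℕ := a - b with hedef
      have hee : 1 ≤ e := by omega
      set Ψ : ℂ → ℂ := fun v => v * F^[p-b-e] v * F^[q-b-e] v with hΨ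
      have e3 : (fun w => Φ w) = fun w => starRingEnd ℂ w * Ψ (F^[e] w) := by
        funext w
        rw [hΦ, hΨ]
        simp only
        rw [← hiter (p-b) e (by omega), ← hiter (q-b) e (by omega)]
        ring
      have hΨm : AEStronglyMeasurable Ψ m := by
        rw [hΨ]
        exact (aestronglyMeasurable_id.mul (iter_aesm h (p-b-e))).mul (iter_aesm h (q-b-e))
      have hΨb : ∀ᵐ v ∂m, ‖Ψ v‖ ≤ 1 := by
        filter_upwards [m_sphere, iter_norm_one h (p-b-e), iter_norm_one h (q-b-e)]
          with v h1 h2 h3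
        rw [hΨ]
        simp only
        rw [norm_mul, norm_mul, h1, h2, h3]
        norm_num
      rw [e3, CE_iter_conj h e hΨm hΨb]
      have e4 : (fun z : ℂ => starRingEnd ℂ z * Ψ z)
          =ᵐ[m] fun z => F^[p-a] z * F^[q-a] z := by
        filter_upwards [m_sphere] with z hz
        rw [hΨ]
        simp only
        rw [show starRingEnd ℂ z * (z * F^[p-b-e] z * F^[q-b-e] z)
          = (z * starRingEnd ℂ z) * (F^[p-b-e] z * F^[q-b-e] z) by ring,
          unit_mul_conj hz, one_mul]
        rw [show p-b-e = p-a by omega, show q-b-e = q-a by omega]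
      rw [integral_congr_ae e4, NN h (p-a) (q-a), mul_zero]
  · -- a < b : condition on F^[a]
    set d : ℕ := b - a with hddef
    have hd : 1 ≤ d := by omega
    set Ψ : ℂ → ℂ := fun v => starRingEnd ℂ v * F^[p-a-d] v * F^[q-a-d] v with hΨ
    have e1 : (fun z => F^[a] z * starRingEnd ℂ (F^[b] z) * F^[p] z * F^[q] z)
        = fun z => (fun w => w * Ψ (F^[d] w)) (F^[a] z) := by
      funext z
      rw [hΨ]
      simp only
      rw [← hiter (p-a) d (by omega), ← hiter (q-a) d (by omega)]
      rw [← hiter b a hab.le, ← hiter p a hpa.le, ← hiter q a hqa.le]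
      ring
    have hΨm : AEStronglyMeasurable Ψ m := by
      rw [hΨ]
      exact ((Complex.continuous_conj.aestronglyMeasurable.mul
        (iter_aesm h (p-a-d)))).mul (iter_aesm h (q-a-d))
    have hΨb : ∀ᵐ v ∂m, ‖Ψ v‖ ≤ 1 := by
      filter_upwards [m_sphere, iter_norm_one h (p-a-d), iter_norm_one h (q-a-d)]
        with v h1 h2 h3
      rw [hΨ]
      simp only
      rw [norm_mul, norm_mul, RCLike.norm_conj, h1, h2, h3]
      norm_num
    have hcomp_m : AEStronglyMeasurable (fun w => w * Ψ (F^[d] w)) m :=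
      aestronglyMeasurable_id.mul (comp_aesm h hΨm d)
    rw [e1, comp_integral h hcomp_m a, CE_iter h d hΨm hΨb]
    have e4 : (fun z : ℂ => z * Ψ z)
        =ᵐ[m] fun z => F^[p-b] z * F^[q-b] z := by
      filter_upwards [m_sphere] with z hz
      rw [hΨ]
      simp only
      rw [show z * (starRingEnd ℂ z * F^[p-a-d] z * F^[q-a-d] z)
        = (z * starRingEnd ℂ z) * (F^[p-a-d] z * F^[q-a-d] z) by ring,
        unit_mul_conj hz, one_mul]
      rw [show p-a-d = p-b by omega, show q-a-d = q-b by omega]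
    rw [integral_congr_ae e4, NN h (p-b) (q-b), mul_zero]

end G
end Aux


theorem stmt6 (f F : ℂ → ℂ)
    (hf : DifferentiableOn ℂ f (Metric.ball 0 1))
    (hmap : Set.MapsTo f (Metric.ball 0 1) (Metric.ball 0 1))
    (h0 : f 0 = 0)
    (hbd : ∀ᵐ z ∂m, Filter.Tendsto (fun r : ℝ => f ((r : ℂ) * z))
      (nhdsWithin 1 (Set.Iio 1)) (nhds (F z)))
    (hinner : ∀ᵐ z ∂m, ‖F z‖ = 1)
    (hrot : ¬ ∃ c : ℂ, Set.EqOn f (fun w => c * w) (Metric.ball 0 1))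
    (ε : ℤ) (hε : ε = 1 ∨ ε = -1)
    (n₁ n₂ n₃ n₄ : ℕ) (h1 : 0 < n₁) (h2 : 0 < n₂) (h3 : 0 < n₃) (h4 : 0 < n₄)
    (hlt : max n₁ n₂ < min n₃ n₄) :
    ∫ z, spow F ε n₁ z * spow F (-ε) n₂ z * F^[n₃] z * F^[n₄] z ∂m = 0 := by
  have h : Aux.Inner f F := ⟨hf, hmap, h0, hbd, hinner⟩
  have hn13 : n₁ < n₃ := by omega
  have hn23 : n₂ < n₃ := by omega
  have hn14 : n₁ < n₄ := by omega
  have hn24 : n₂ < n₄ := by omega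
  rcases hε with rfl | rfl
  · simp only [spow, if_pos rfl, if_neg (by norm_num : (-1 : ℤ) ≠ 1)]
    exact Aux.main_int h h1 h2 hn13 hn23 hn14 hn24
  · simp only [spow, if_neg (by norm_num : (-1 : ℤ) ≠ 1),
      if_pos (by norm_num : (-(-1) : ℤ) = 1)]
    have e : ∫ z, starRingEnd ℂ (F^[n₁] z) * F^[n₂] z * F^[n₃] z * F^[n₄] z ∂m
        = ∫ z, F^[n₂] z * starRingEnd ℂ (F^[n₁] z) * F^[n₃] z * F^[n₄] z ∂m := by
      congr 1; funext z; ring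
    rw [e]
    exact Aux.main_int h h2 h1 hn23 hn13 hn24 hn14
end

section
/- Let f be an analytic self-map of the unit disc with f(0)=0 and 0 < |f'(0)| < 1. Then there exists a positive integer d = d(f) such that |f^n(w)| < |f'(0)|^n·(1−|w|)^{−d} for all w ∈ 𝔻 and all n ≥ 1. -/
open MeasureTheory Set Metric Filter Complex

open Real in
section

/-- quadratic fact -/
lemma quadfact {A W t X : ℝ} (hA0 : 0 ≤ A) (hA1 : A < 1) (hW0 : 0 ≤ W) (hW1 : W ≤ 1)
    (ht0 : 0 ≤ t) (ht1 : t < 1) (hX : X ≤ A * W)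
    (hS : A ^ 2 + W ^ 2 - 2 * X ≤ t ^ 2 * (1 - 2 * X + A ^ 2 * W ^ 2)) :
    W * (1 + A * t) ≤ A + t := by
  have h2t : (0:ℝ) ≤ 2 * (1 - t ^ 2) := by nlinarith
  have hXt := mul_le_mul_of_nonneg_left hX h2t
  have hQ : W ^ 2 * (1 - A ^ 2 * t ^ 2) - 2 * A * W * (1 - t ^ 2) + A ^ 2 - t ^ 2 ≤ 0 := by
    nlinarith [hS, hXt]
  have hAW1 : A * W ≤ 1 := mul_le_one₀ hA1.le hW0 hW1
  nlinarith [hQ, mul_nonneg ht0 (sub_nonneg.2 hAW1)]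

lemma refined_schwarz {f : ℂ → ℂ} (hf : DifferentiableOn ℂ f (ball 0 1))
    (hmap : MapsTo f (ball 0 1) (ball 0 1)) (h0 : f 0 = 0)
    (hlt : ‖deriv f 0‖ < 1) {z : ℂ} (hz : z ∈ ball (0:ℂ) 1) :
    ‖f z‖ * (1 + ‖deriv f 0‖ * ‖z‖) ≤ ‖z‖ * (‖deriv f 0‖ + ‖z‖) := by
  set a' : ℂ := deriv f 0 with ha'
  set g : ℂ → ℂ := dslope f 0 with hg
  have hmap' : MapsTo f (ball 0 1) (ball (f 0) 1) := by rwa [h0]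
  have hg_diff : DifferentiableOn ℂ g (ball 0 1) :=
    (differentiableOn_dslope (isOpen_ball.mem_nhds (by simp))).mpr hf
  have hg_le : ∀ x ∈ ball (0:ℂ) 1, ‖g x‖ ≤ 1 := fun x hx => by
    simpa using norm_dslope_le_div_of_mapsTo_ball hf (hmap'.mono_right ball_subset_closedBall) hx
  have hg0 : g 0 = a' := dslope_same f 0
  set h : ℂ → ℂ := fun x => (a' - g x) / (1 - (starRingEnd ℂ) a' * g x) with hh
  have hden : ∀ x ∈ ball (0:ℂ) 1, 1 - (starRingEnd ℂ) a' * g x ≠ 0 := by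
    intro x hx he
    have h1 : ‖(starRingEnd ℂ) a' * g x‖ < 1 := by
      rw [norm_mul, RCLike.norm_conj]
      calc ‖a'‖ * ‖g x‖ ≤ ‖a'‖ * 1 := by
            exact mul_le_mul_of_nonneg_left (hg_le x hx) (norm_nonneg _)
        _ < 1 := by simpa using hlt
    have : (1:ℂ) = (starRingEnd ℂ) a' * g x := by linear_combination he
    rw [← this] at h1; simp at h1
  have hh_diff : DifferentiableOn ℂ h (ball 0 1) := by
    apply DifferentiableOn.div
    · exact (differentiableOn_const _).sub hg_diff
    · exact (differentiableOn_const _).sub ((differentiableOn_const _).mul hg_diff)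
    · exact hden
  have hh0 : h 0 = 0 := by simp [hh, hg0]
  -- |h x| ≤ 1 on the ball
  have hmob : ∀ w : ℂ, ‖w‖ ≤ 1 → ‖a' - w‖ ≤ ‖1 - (starRingEnd ℂ) a' * w‖ := by
    intro w hw
    have h1 : normSq (a' - w) ≤ normSq (1 - (starRingEnd ℂ) a' * w) := by
      have e1 : normSq (a' - w) = normSq a' + normSq w - 2 * ((starRingEnd ℂ) a' * w).re := by
        rw [normSq_sub]
        congr 2
        have : (starRingEnd ℂ) (a' * (starRingEnd ℂ) w) = (starRingEnd ℂ) a' * w := by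
          rw [map_mul, Complex.conj_conj]
        rw [← this, Complex.conj_re]
      have e2 : normSq (1 - (starRingEnd ℂ) a' * w)
          = 1 - 2 * ((starRingEnd ℂ) a' * w).re + normSq a' * normSq w := by
        rw [normSq_sub, normSq_mul, normSq_conj]
        simp [Complex.conj_re]
        ring
      rw [e1, e2]
      have ha2 : normSq a' ≤ 1 := by
        rw [← Complex.sq_norm]
        nlinarith [norm_nonneg a', hlt]
      have hw2 : normSq w ≤ 1 := by
        rw [← Complex.sq_norm]
        nlinarith [norm_nonneg w]
      nlinarith [ha2, hw2]
    have := Real.sqrt_le_sqrt h1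
    rwa [← Complex.norm_def, ← Complex.norm_def] at this
  have hh_le1 : ∀ x ∈ ball (0:ℂ) 1, ‖h x‖ ≤ 1 := by
    intro x hx
    rw [hh]
    simp only [norm_div]
    have hdpos : (0:ℝ) < ‖1 - (starRingEnd ℂ) a' * g x‖ := norm_pos_iff.2 (hden x hx)
    rw [div_le_one hdpos]
    simpa using hmob (g x) (hg_le x hx)
  -- Schwarz for h (closed target version)
  have hh_schwarz : ∀ x ∈ ball (0:ℂ) 1, ‖h x‖ ≤ ‖x‖ := by
    intro x hx
    refine le_of_forall_pos_le_add ?_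
    intro ε hε
    have hmapsh : MapsTo h (ball 0 1) (ball (h 0) (1 + ε)) := by
      intro y hy
      rw [mem_ball, hh0, dist_zero_right]
      exact lt_of_le_of_lt (hh_le1 y hy) (by linarith)
    have := dist_le_div_mul_dist_of_mapsTo_ball hh_diff (hmapsh.mono_right ball_subset_closedBall) hx
    rw [hh0, dist_zero_right, dist_zero_right, div_one] at this
    have hx1 : ‖x‖ ≤ 1 := le_of_lt (by simpa [mem_ball, dist_zero_right] using hx)
    nlinarith [this, norm_nonneg x]
  -- put it together
  rcases eq_or_ne z 0 with rfl | hz0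
  · simp [h0]
  · have hwz : f z = z * g z := by
      rw [hg, dslope_of_ne f hz0, slope_def_field, h0, sub_zero, sub_zero]
      field_simp
    set w : ℂ := g z with hwdef
    have hnorm : ‖f z‖ = ‖z‖ * ‖w‖ := by rw [hwz, norm_mul]
    have hkey : ‖a' - w‖ ≤ ‖z‖ * ‖1 - (starRingEnd ℂ) a' * w‖ := by
      have h2 := hh_schwarz z hz
      rw [hh] at h2
      simp only [norm_div] at h2
      rwa [div_le_iff₀ (norm_pos_iff.2 (hden z hz))] at h2
    -- convert to scalar inequality
    have hS : ‖a'‖ ^ 2 + ‖w‖ ^ 2 - 2 * ((starRingEnd ℂ) a' * w).re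
        ≤ ‖z‖ ^ 2 * (1 - 2 * ((starRingEnd ℂ) a' * w).re + ‖a'‖ ^ 2 * ‖w‖ ^ 2) := by
      have h2 : normSq (a' - w) ≤ ‖z‖ ^ 2 * normSq (1 - (starRingEnd ℂ) a' * w) := by
        rw [Complex.normSq_eq_norm_sq, Complex.normSq_eq_norm_sq]
        nlinarith [mul_le_mul hkey hkey (norm_nonneg _)
          (mul_nonneg (norm_nonneg z) (norm_nonneg _))]
      have e1 : normSq (a' - w) = ‖a'‖ ^ 2 + ‖w‖ ^ 2 - 2 * ((starRingEnd ℂ) a' * w).re := by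
        rw [normSq_sub]
        rw [← Complex.sq_norm, ← Complex.sq_norm]
        congr 2
        have : (starRingEnd ℂ) (a' * (starRingEnd ℂ) w) = (starRingEnd ℂ) a' * w := by
          rw [map_mul, Complex.conj_conj]
        rw [← this, Complex.conj_re]
      have e2 : normSq (1 - (starRingEnd ℂ) a' * w)
          = 1 - 2 * ((starRingEnd ℂ) a' * w).re + ‖a'‖ ^ 2 * ‖w‖ ^ 2 := by
        rw [normSq_sub, normSq_mul, normSq_conj, normSq_one, one_mul, Complex.conj_re,
          Complex.normSq_eq_norm_sq, Complex.normSq_eq_norm_sq]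
        ring
      rw [e1, e2] at h2
      exact h2
    have hX : ((starRingEnd ℂ) a' * w).re ≤ ‖a'‖ * ‖w‖ := by
      calc ((starRingEnd ℂ) a' * w).re ≤ ‖(starRingEnd ℂ) a' * w‖ := Complex.re_le_norm _
        _ = ‖a'‖ * ‖w‖ := by rw [norm_mul, RCLike.norm_conj]
    have hball : ‖z‖ < 1 := by simpa [mem_ball, dist_zero_right] using hz
    have hq := quadfact (norm_nonneg a') hlt (norm_nonneg w) (hg_le z hz)
      (norm_nonneg z) hball hX hS
    rw [hnorm]
    calc ‖z‖ * ‖w‖ * (1 + ‖a'‖ * ‖z‖) = ‖z‖ * (‖w‖ * (1 + ‖a'‖ * ‖z‖)) := by ring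
      _ ≤ ‖z‖ * (‖a'‖ + ‖z‖) := mul_le_mul_of_nonneg_left hq (norm_nonneg z)

section Seq
variable {a : ℝ} {r : ℕ → ℝ}

lemma seq_mono (ha0 : 0 < a) (ha1 : a < 1) (h0 : ∀ n, 0 ≤ r n) (h1 : ∀ n, r n < 1)
    (hrec : ∀ n, r (n+1) * (1 + a * r n) ≤ r n * (a + r n)) :
    ∀ n, r (n+1) ≤ r n := by
  intro n
  have hpos : (0:ℝ) < 1 + a * r n := by nlinarith [h0 n]
  nlinarith [hrec n, mul_nonneg (h0 n) (mul_nonneg (by linarith : (0:ℝ) ≤ 1 - a)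
    (by linarith [h1 n] : (0:ℝ) ≤ 1 - r n))]

lemma seq_le_start (ha0 : 0 < a) (ha1 : a < 1) (h0 : ∀ n, 0 ≤ r n) (h1 : ∀ n, r n < 1)
    (hrec : ∀ n, r (n+1) * (1 + a * r n) ≤ r n * (a + r n)) :
    ∀ n, r n ≤ r 0 := by
  intro n
  induction n with
  | zero => exact le_rfl
  | succ k ih => exact (seq_mono ha0 ha1 h0 h1 hrec k).trans ih

lemma masterB (ha0 : 0 < a) (ha1 : a < 1) (h0 : ∀ n, 0 ≤ r n) (h1 : ∀ n, r n < 1)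
    (hrec : ∀ n, r (n+1) * (1 + a * r n) ≤ r n * (a + r n)) (n : ℕ) :
    r n ≤ a ^ n * (r 0 / (1 - r 0)) * Real.exp (r 0 / (a * (1 - r 0) ^ 2)) := by
  have hsm : ∀ m, 0 < 1 - r m := fun m => by linarith [h1 m]
  have hs0 : 0 < 1 - r 0 := hsm 0
  set t : ℕ → ℝ := fun m => r m / (1 - r m) with ht
  have ht0 : ∀ m, 0 ≤ t m := fun m => div_nonneg (h0 m) (hsm m).le
  have hrt : ∀ m, r m ≤ t m := by
    intro m
    rw [ht]
    dsimp only
    rw [le_div_iff₀ (hsm m)]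
    nlinarith [h0 m, h1 m]
  have hr0 := seq_le_start ha0 ha1 h0 h1 hrec
  set b : ℝ := a + (1 - a) * r 0 with hb
  have hb0 : 0 < b := by nlinarith [h0 0]
  have hb1 : b < 1 := by nlinarith [h1 0]
  have hstep : ∀ m, t (m+1) ≤ (a + (1 - a) * r m) * t m := by
    intro m
    have he : (a + (1 - a) * r m) * t m = ((a + (1 - a) * r m) * r m) / (1 - r m) := by
      rw [ht]; dsimp only; ring
    rw [ht]
    dsimp only
    rw [show (a + (1 - a) * r m) * (r m / (1 - r m))
        = ((a + (1 - a) * r m) * r m) / (1 - r m) from (mul_div_assoc _ _ _).symm,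
      div_le_div_iff₀ (hsm (m+1)) (hsm m)]
    -- r (m+1) * (1 - r m) ≤ (a + (1-a) * r m) * r m * (1 - r (m+1))
    have hm := seq_mono ha0 ha1 h0 h1 hrec m
    have hA : 0 ≤ (1 - r m) * (r m * (a + r m) - r (m+1) * (1 + a * r m)) :=
      mul_nonneg (by linarith [h1 m]) (by linarith [hrec m])
    nlinarith [hA, mul_nonneg (mul_nonneg (h0 m) (h0 m)) (sub_nonneg.2 hm)]
  have hQ : ∀ m, t m ≤ b ^ m * t 0 := by
    intro m
    induction m with
    | zero => simp
    | succ k ih =>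
      have h2' : a + (1 - a) * r k ≤ b := by
        have := mul_le_mul_of_nonneg_left (hr0 k) (by linarith : (0:ℝ) ≤ 1 - a)
        rw [hb]; linarith
      calc t (k+1) ≤ (a + (1 - a) * r k) * t k := hstep k
        _ ≤ b * t k := mul_le_mul_of_nonneg_right h2' (ht0 k)
        _ ≤ b * (b ^ k * t 0) := mul_le_mul_of_nonneg_left ih hb0.le
        _ = b ^ (k+1) * t 0 := by ring
  have hrb : ∀ m, r m ≤ b ^ m * t 0 := fun m => (hrt m).trans (hQ m)
  set M : ℝ := r 0 / (a * (1 - r 0) ^ 2) with hM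
  have hM0 : 0 ≤ M := div_nonneg (h0 0) (by positivity)
  have hMident : (1 - a) / a * t 0 = M * (1 - b) := by
    rw [hM, ht, hb]
    dsimp only
    field_simp
    ring
  clear_value t b M
  have hP : ∀ m, t m ≤ a ^ m * t 0 * Real.exp (M * (1 - b ^ m)) := by
    intro m
    induction m with
    | zero => simp
    | succ k ih =>
      have e1 : a + (1 - a) * r k ≤ a * Real.exp ((1 - a) / a * r k) := by
        have h3 := Real.add_one_le_exp ((1 - a) / a * r k)
        have h4 := mul_le_mul_of_nonneg_left h3 ha0.le
        have h5 : a + (1 - a) * r k = a * ((1 - a) / a * r k + 1) := by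
          field_simp
          ring
        rw [h5]; exact h4
      have hexp : (0:ℝ) ≤ Real.exp ((1 - a) / a * r k) := (Real.exp_pos _).le
      calc t (k+1) ≤ (a + (1 - a) * r k) * t k := hstep k
        _ ≤ (a * Real.exp ((1 - a) / a * r k)) * t k :=
            mul_le_mul_of_nonneg_right e1 (ht0 k)
        _ ≤ (a * Real.exp ((1 - a) / a * r k)) * (a ^ k * t 0 * Real.exp (M * (1 - b ^ k))) := by
            exact mul_le_mul_of_nonneg_left ih (mul_nonneg ha0.le (Real.exp_pos _).le)
        _ = a ^ (k+1) * t 0 * (Real.exp ((1 - a) / a * r k) * Real.exp (M * (1 - b ^ k))) := by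
            ring
        _ = a ^ (k+1) * t 0 * Real.exp ((1 - a) / a * r k + M * (1 - b ^ k)) := by
            rw [← Real.exp_add]
        _ ≤ a ^ (k+1) * t 0 * Real.exp (M * (1 - b ^ (k+1))) := by
            apply mul_le_mul_of_nonneg_left _ (mul_nonneg (pow_nonneg ha0.le _) (ht0 0))
            apply Real.exp_le_exp.2
            have h4 : (1 - a) / a * r k ≤ (1 - a) / a * (b ^ k * t 0) :=
              mul_le_mul_of_nonneg_left (hrb k) (div_nonneg (by linarith) ha0.le)
            have h5 : (1 - a) / a * (b ^ k * t 0) = M * (1 - b) * b ^ k := by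
              have : (1 - a) / a * (b ^ k * t 0) = ((1 - a) / a * t 0) * b ^ k := by ring
              rw [this, hMident]
            have h7 : (1 - a) / a * r k ≤ M * (1 - b) * b ^ k := h4.trans_eq h5
            have h6 : M * (1 - b ^ (k+1)) = M * (1 - b ^ k) + M * (1 - b) * b ^ k := by ring
            linarith [h7, h6]
  have hfin := (hrt n).trans (hP n)
  have hee : Real.exp (M * (1 - b ^ n)) ≤ Real.exp M := by
    apply Real.exp_le_exp.2
    nlinarith [pow_nonneg hb0.le n, hM0]
  have hee2 : a ^ n * t 0 * Real.exp (M * (1 - b ^ n)) ≤ a ^ n * t 0 * Real.exp M :=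
    mul_le_mul_of_nonneg_left hee (mul_nonneg (pow_nonneg ha0.le _) (ht0 0))
  have hres : r n ≤ a ^ n * t 0 * Real.exp M := hfin.trans hee2
  subst ht; subst hM
  exact hres

lemma escape (ha0 : 0 < a) (ha1 : a < 1) (h0 : ∀ n, 0 ≤ r n) (h1 : ∀ n, r n < 1)
    (hrec : ∀ n, r (n+1) * (1 + a * r n) ≤ r n * (a + r n)) (n : ℕ)
    (hbig : ∀ k < n, 1/2 ≤ r k) : (3 / (2 + a)) ^ n * (1 - r 0) ≤ 1 := by
  have h2a : (0:ℝ) < 2 + a := by linarith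
  have key : ∀ k < n, (3 / (2 + a)) * (1 - r k) ≤ 1 - r (k+1) := by
    intro k hk
    have hv := hbig k hk
    rw [div_mul_eq_mul_div, div_le_iff₀ h2a]
    have hH : 0 ≤ r k * (a + r k) - r (k+1) * (1 + a * r k) := by linarith [hrec k]
    have hpos : (0:ℝ) < 1 + a * r k := by nlinarith [h0 k]
    have hcomb : 0 ≤ (2 + a) * (r k * (a + r k) - r (k+1) * (1 + a * r k))
        + (1 - r k) * (1 - a) * (2 * r k - 1) := by
      have := mul_nonneg (mul_nonneg (by linarith [h1 k] : (0:ℝ) ≤ 1 - r k)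
        (by linarith : (0:ℝ) ≤ 1 - a)) (by linarith : (0:ℝ) ≤ 2 * r k - 1)
      nlinarith [mul_nonneg h2a.le hH]
    nlinarith [hcomb, hpos, mul_pos hpos h2a]
  have hind : ∀ m, m ≤ n → (3 / (2 + a)) ^ m * (1 - r 0) ≤ 1 - r m := by
    intro m
    induction m with
    | zero => intro _; simp
    | succ k ih =>
      intro hm
      have ihk := ih (le_trans (Nat.le_succ k) hm)
      have hk := key k (lt_of_lt_of_le (Nat.lt_succ_self k) hm)
      calc (3 / (2 + a)) ^ (k+1) * (1 - r 0)
          = (3 / (2 + a)) * ((3 / (2 + a)) ^ k * (1 - r 0)) := by ring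
        _ ≤ (3 / (2 + a)) * (1 - r k) := mul_le_mul_of_nonneg_left ihk (by positivity)
        _ ≤ 1 - r (k+1) := hk
  have := hind n le_rfl
  linarith [h0 n]


lemma hb2_aux {a x : ℝ} (ha0 : 0 < a) (hx0 : 0 ≤ x) (hx : x < 1/2) :
    x / (a * (1 - x) ^ 2) ≤ 2 / a := by
  rw [div_le_div_iff₀ (mul_pos ha0 (pow_pos (by linarith) 2)) ha0]
  have k1 : x ≤ 2 * (1 - x) ^ 2 := by nlinarith
  nlinarith [mul_le_mul_of_nonneg_left k1 ha0.le]

lemma exists_half (ha0 : 0 < a) (ha1 : a < 1) (h0 : ∀ n, 0 ≤ r n) (h1 : ∀ n, r n < 1)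
    (hrec : ∀ n, r (n+1) * (1 + a * r n) ≤ r n * (a + r n)) :
    ∃ n, r n < 1/2 := by
  by_contra hc
  push_neg at hc
  have hs0 : 0 < 1 - r 0 := by linarith [h1 0]
  have hlam : 1 < 3 / (2 + a) := by
    rw [lt_div_iff₀ (by linarith : (0:ℝ) < 2 + a)]; linarith
  obtain ⟨n, hn⟩ := pow_unbounded_of_one_lt (1 / (1 - r 0)) hlam
  have hesc := escape ha0 ha1 h0 h1 hrec n (fun k _ => hc k)
  have h2 : 1 < (3 / (2 + a)) ^ n * (1 - r 0) := by
    rw [div_lt_iff₀ hs0] at hn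
    linarith
  linarith

lemma mainReal (ha0 : 0 < a) (ha1 : a < 1) (h0 : ∀ n, 0 ≤ r n) (h1 : ∀ n, r n < 1)
    (hrec : ∀ n, r (n+1) * (1 + a * r n) ≤ r n * (a + r n))
    {D : ℝ} (hD1 : 1 + 4/a ≤ D)
    (hD2 : Real.log (1/a) / Real.log (3/(2+a)) + (2/a) / Real.log 2 ≤ D) (n : ℕ) :
    r n ≤ a ^ n * Real.exp (D * Real.log (1 / (1 - r 0))) := by
  classical
  have hs0 : 0 < 1 - r 0 := by linarith [h1 0]
  set L : ℝ := Real.log (1 / (1 - r 0)) with hL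
  have hL0 : 0 ≤ L := Real.log_nonneg (by rw [le_div_iff₀ hs0]; linarith [h0 0])
  have hexpL : Real.exp L = 1 / (1 - r 0) := Real.exp_log (one_div_pos.2 hs0)
  have han : 0 ≤ a ^ n := pow_nonneg ha0.le n
  rcases lt_or_ge (r 0) (1/2) with hr | hr
  · -- starting point already small
    have hmB := masterB ha0 ha1 h0 h1 hrec n
    have hs12 : (1:ℝ)/2 < 1 - r 0 := by linarith
    have hr0L : r 0 ≤ L := by
      have hlog := Real.log_le_sub_one_of_pos hs0
      have hLeq : L = - Real.log (1 - r 0) := by rw [hL, one_div, Real.log_inv]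
      linarith
    have hB1 : r 0 / (1 - r 0) ≤ Real.exp L := by
      rw [hexpL, div_le_div_iff₀ hs0 hs0]
      nlinarith [h1 0, hs0]
    have hB2 : r 0 / (a * (1 - r 0) ^ 2) ≤ 4/a * L := by
      rw [div_le_iff₀ (mul_pos ha0 (pow_pos hs0 2))]
      have h4 : 4/a * L * (a * (1 - r 0) ^ 2) = 4 * L * (1 - r 0) ^ 2 := by
        field_simp
      rw [h4]
      nlinarith [mul_nonneg hL0 (by nlinarith : (0:ℝ) ≤ 4 * (1 - r 0) ^ 2 - 1)]
    calc r n ≤ a ^ n * (r 0 / (1 - r 0)) * Real.exp (r 0 / (a * (1 - r 0) ^ 2)) := hmB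
      _ ≤ a ^ n * Real.exp L * Real.exp (4/a * L) :=
          mul_le_mul (mul_le_mul_of_nonneg_left hB1 han) (Real.exp_le_exp.2 hB2)
            (Real.exp_pos _).le (mul_nonneg han (Real.exp_pos _).le)
      _ = a ^ n * Real.exp (L + 4/a * L) := by rw [mul_assoc, ← Real.exp_add]
      _ ≤ a ^ n * Real.exp (D * L) := by
          apply mul_le_mul_of_nonneg_left _ han
          apply Real.exp_le_exp.2
          have he : L + 4/a * L = (1 + 4/a) * L := by ring
          rw [he]
          exact mul_le_mul_of_nonneg_right hD1 hL0
  · -- starting point large : two-phase argument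
    have hlam1 : 1 < 3/(2+a) := by
      rw [lt_div_iff₀ (by linarith : (0:ℝ) < 2 + a)]; linarith
    have hlam0 : (0:ℝ) < 3/(2+a) := lt_trans one_pos hlam1
    have hloglam : 0 < Real.log (3/(2+a)) := Real.log_pos hlam1
    have hLa : 0 < Real.log (1/a) := Real.log_pos (by rw [lt_div_iff₀ ha0]; linarith)
    have hlog2 : 0 < Real.log 2 := Real.log_pos (by norm_num)
    have hL2 : Real.log 2 ≤ L := by
      rw [hL]
      apply Real.log_le_log (by norm_num)
      rw [le_div_iff₀ hs0]; linarith
    have hex := exists_half ha0 ha1 h0 h1 hrec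
    obtain ⟨N, hNs, hNmin⟩ : ∃ N, r N < 1/2 ∧ ∀ k, k < N → 1/2 ≤ r k :=
      ⟨Nat.find hex, Nat.find_spec hex, fun k hk => le_of_not_gt (Nat.find_min hex hk)⟩
    clear hex
    have hesc := escape ha0 ha1 h0 h1 hrec N hNmin
    have hNlam : ((N:ℝ)) * Real.log (3/(2+a)) ≤ L := by
      have h2 : (3/(2+a)) ^ N ≤ 1/(1 - r 0) := by rw [le_div_iff₀ hs0]; exact hesc
      have h3 := Real.log_le_log (pow_pos hlam0 N) h2
      rwa [Real.log_pow] at h3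
    have hNle : (N:ℝ) ≤ L / Real.log (3/(2+a)) := by
      rw [le_div_iff₀ hloglam]; exact hNlam
    have hinvA : Real.exp (Real.log (1/a)) = 1/a := Real.exp_log (one_div_pos.2 ha0)
    have haN : (1/a) ^ N ≤ Real.exp (Real.log (1/a)/Real.log (3/(2+a)) * L) := by
      have hpowexp : ((1:ℝ)/a) ^ N = Real.exp ((N:ℝ) * Real.log (1/a)) := by
        rw [Real.exp_nat_mul, hinvA]
      rw [hpowexp]
      apply Real.exp_le_exp.2
      have he : Real.log (1/a)/Real.log (3/(2+a)) * L
          = (L / Real.log (3/(2+a))) * Real.log (1/a) := by ring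
      rw [he]
      exact mul_le_mul_of_nonneg_right hNle hLa.le
    rcases le_or_gt N n with hnN | hnN
    · -- after the escape time : apply masterB to the shifted sequence
      have hmB : r n ≤ a ^ (n-N) * (r N / (1 - r N)) * Real.exp (r N / (a * (1 - r N) ^ 2)) := by
        have hh := masterB (r := fun m => r (N + m)) ha0 ha1 (fun m => h0 _) (fun m => h1 _)
          (fun m => hrec (N+m)) (n - N)
        simpa [Nat.add_sub_cancel' hnN] using hh
      -- hmB : r n ≤ a^(n-N) * (r N/(1-r N)) * exp (r N/(a*(1-r N)^2))
      have hsN : (1:ℝ)/2 < 1 - r N := by linarith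
      have hb1 : r N / (1 - r N) ≤ 1 := by
        rw [div_le_one (by linarith)]; linarith
      have hb2 : r N / (a * (1 - r N) ^ 2) ≤ 2/a := hb2_aux ha0 (h0 N) hNs
      have h2aL : 2/a ≤ (2/a)/Real.log 2 * L := by
        have hcn : (0:ℝ) ≤ (2/a)/Real.log 2 :=
          div_nonneg (div_nonneg (by norm_num) ha0.le) hlog2.le
        have := mul_le_mul_of_nonneg_left hL2 hcn
        rw [div_mul_cancel₀ _ hlog2.ne'] at this
        linarith
      have hpowsplit : a ^ (n-N) = a ^ n * (1/a) ^ N := by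
        have h5 : a ^ (n-N) * a ^ N = a ^ n := by
          rw [← pow_add, Nat.sub_add_cancel hnN]
        rw [one_div, inv_pow, ← h5, mul_inv_cancel_right₀ (pow_ne_zero _ ha0.ne')]
      calc r n ≤ a ^ (n-N) * (r N/(1 - r N)) * Real.exp (r N/(a*(1 - r N)^2)) := hmB
        _ ≤ a ^ (n-N) * 1 * Real.exp ((2/a)/Real.log 2 * L) :=
            mul_le_mul (mul_le_mul_of_nonneg_left hb1 (pow_nonneg ha0.le _))
              (Real.exp_le_exp.2 (hb2.trans h2aL)) (Real.exp_pos _).le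
              (mul_nonneg (pow_nonneg ha0.le _) zero_le_one)
        _ = a ^ n * ((1/a) ^ N * Real.exp ((2/a)/Real.log 2 * L)) := by
            rw [hpowsplit]; ring
        _ ≤ a ^ n * (Real.exp (Real.log (1/a)/Real.log (3/(2+a)) * L)
              * Real.exp ((2/a)/Real.log 2 * L)) :=
            mul_le_mul_of_nonneg_left
              (mul_le_mul_of_nonneg_right haN (Real.exp_pos _).le) han
        _ = a ^ n * Real.exp (Real.log (1/a)/Real.log (3/(2+a)) * L + (2/a)/Real.log 2 * L) := by
            rw [← Real.exp_add]
        _ ≤ a ^ n * Real.exp (D * L) := by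
            apply mul_le_mul_of_nonneg_left _ han
            apply Real.exp_le_exp.2
            have he : Real.log (1/a)/Real.log (3/(2+a)) * L + (2/a)/Real.log 2 * L
                = (Real.log (1/a)/Real.log (3/(2+a)) + (2/a)/Real.log 2) * L := by ring
            rw [he]
            exact mul_le_mul_of_nonneg_right hD2 hL0
    · -- before the escape time : r n < 1 suffices
      have hup : (1/a) ^ n ≤ Real.exp (D * L) := by
        have step1 : (1/a) ^ n ≤ (1/a) ^ N :=
          pow_le_pow_right₀ (by rw [le_div_iff₀ ha0]; linarith) hnN.le
        refine step1.trans (haN.trans (Real.exp_le_exp.2 ?_))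
        apply mul_le_mul_of_nonneg_right _ hL0
        have hcn : (0:ℝ) ≤ (2/a)/Real.log 2 :=
          div_nonneg (div_nonneg (by norm_num) ha0.le) hlog2.le
        linarith [hD2]
      have hfin : 1 ≤ a ^ n * Real.exp (D * L) := by
        have h5 : a ^ n * (1/a) ^ n = 1 := by
          rw [one_div, inv_pow, mul_inv_cancel₀ (pow_ne_zero _ ha0.ne')]
        calc (1:ℝ) = a ^ n * (1/a) ^ n := h5.symm
          _ ≤ a ^ n * Real.exp (D * L) := mul_le_mul_of_nonneg_left hup han
      exact (h1 n).le.trans hfin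

end Seq
end

theorem stmt15 (f : ℂ → ℂ)
    (hf : DifferentiableOn ℂ f (Metric.ball 0 1))
    (hmap : Set.MapsTo f (Metric.ball 0 1) (Metric.ball 0 1))
    (h0 : f 0 = 0)
    (hpos : 0 < ‖deriv f 0‖) (hlt : ‖deriv f 0‖ < 1) :
    ∃ d : ℕ, 0 < d ∧ ∀ w ∈ Metric.ball (0:ℂ) 1, ∀ n : ℕ, 1 ≤ n →
      ‖f^[n] w‖ < ‖deriv f 0‖ ^ n * (1 - ‖w‖) ^ (-(d : ℤ)) := by
  have ha0 : 0 < ‖deriv f 0‖ := hpos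
  have ha1 : ‖deriv f 0‖ < 1 := hlt
  set a : ℝ := ‖deriv f 0‖ with ha
  set D : ℝ := max (1 + 4/a) (Real.log (1/a) / Real.log (3/(2+a)) + (2/a) / Real.log 2) with hD
  have hD1 : 1 + 4/a ≤ D := le_max_left _ _
  have hD2 : Real.log (1/a) / Real.log (3/(2+a)) + (2/a) / Real.log 2 ≤ D := le_max_right _ _
  set d : ℕ := ⌈D⌉₊ + 1 with hd
  have hDd : D ≤ (d:ℝ) := by
    have h := Nat.le_ceil D
    rw [hd]
    push_cast
    linarith
  clear_value D d
  refine ⟨d + 1, Nat.succ_pos _, ?_⟩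
  intro w hw n hn
  have hiter : ∀ m, f^[m] w ∈ Metric.ball (0:ℂ) 1 := fun m => (hmap.iterate m) hw
  set r : ℕ → ℝ := fun m => ‖f^[m] w‖ with hr
  have h0' : ∀ m, 0 ≤ r m := fun m => norm_nonneg _
  have h1' : ∀ m, r m < 1 := fun m => by
    have hm := hiter m
    rw [mem_ball_zero_iff] at hm
    exact hm
  have hrec : ∀ m, r (m+1) * (1 + a * r m) ≤ r m * (a + r m) := by
    intro m
    have hz := hiter m
    have hrs := refined_schwarz hf hmap h0 ha1 hz
    rw [hr]
    dsimp only
    rw [Function.iterate_succ_apply']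
    exact hrs
  have hr0 : r 0 = ‖w‖ := rfl
  rcases eq_or_ne w 0 with rfl | hw0
  · rw [Function.iterate_fixed h0 n, norm_zero]
    simp only [norm_zero, sub_zero, one_zpow, mul_one]
    exact pow_pos ha0 n
  · have hw1 : ‖w‖ < 1 := by rwa [mem_ball_zero_iff] at hw
    have hwpos : 0 < ‖w‖ := norm_pos_iff.2 hw0
    have hs0 : 0 < 1 - ‖w‖ := by linarith
    have hmain := mainReal ha0 ha1 h0' h1' hrec hD1 hD2 n
    rw [hr0] at hmain
    set L : ℝ := Real.log (1 / (1 - ‖w‖)) with hL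
    have hL0 : 0 ≤ L := Real.log_nonneg (by rw [le_div_iff₀ hs0]; linarith)
    have h2 : Real.exp (D * L) ≤ Real.exp ((d:ℝ) * L) :=
      Real.exp_le_exp.2 (mul_le_mul_of_nonneg_right hDd hL0)
    have h3 : Real.exp ((d:ℝ) * L) = (1/(1-‖w‖)) ^ d := by
      rw [hL, Real.exp_nat_mul, Real.exp_log (one_div_pos.2 hs0)]
    have h4 : ((1:ℝ)/(1-‖w‖)) ^ d < (1/(1-‖w‖)) ^ (d+1) := by
      apply pow_lt_pow_right₀ ?_ (Nat.lt_succ_self d)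
      rw [lt_div_iff₀ hs0]; linarith
    have h5 : (1 - ‖w‖ : ℝ) ^ (-((d+1 : ℕ) : ℤ)) = (1/(1-‖w‖)) ^ (d+1) := by
      rw [zpow_neg, zpow_natCast, ← inv_pow, one_div]
    calc ‖f^[n] w‖ ≤ a ^ n * Real.exp (D * L) := hmain
      _ ≤ a ^ n * Real.exp ((d:ℝ) * L) := mul_le_mul_of_nonneg_left h2 (pow_nonneg ha0.le n)
      _ = a ^ n * (1/(1-‖w‖)) ^ d := by rw [h3]
      _ < a ^ n * (1/(1-‖w‖)) ^ (d+1) := mul_lt_mul_of_pos_left h4 (pow_pos ha0 n)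
      _ = a ^ n * (1-‖w‖) ^ (-((d+1 : ℕ) : ℤ)) := by rw [h5]
end

section
/- Let f be an analytic self-map of 𝔻 with f(0)=0 and a=|f'(0)|<1. There exists n_0 = n_0(f) such that for all positive integers k, l, n with l ≤ n and n ≥ n_0, the l-th Taylor coefficient of g(w)=(f^n(w))^k satisfies |g^{(l)}(0)|/l! ≤ a^{kn/2}. -/
open MeasureTheory Set Metric Filter Complex
open Topology

lemma cauchy_est {g : ℂ → ℂ} {r C : ℝ} (hr : 0 < r)
    (hg : DifferentiableOn ℂ g (closedBall 0 r))
    (hC : ∀ w ∈ closedBall (0:ℂ) r, ‖g w‖ ≤ C) (l : ℕ) :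
    ‖iteratedDeriv l g 0‖ ≤ (Nat.factorial l : ℝ) * (C / r ^ l) := by
  have hC0 : 0 ≤ C := le_trans (norm_nonneg _) (hC 0 (mem_closedBall_self hr.le))
  lift r to NNReal using hr.le with R hR
  have hR0 : (0 : NNReal) < R := by exact_mod_cast hr
  have hp := hg.hasFPowerSeriesOnBall hR0
  set p := cauchyPowerSeries g 0 R with hpdef
  have h1 : iteratedDeriv l g 0 = l.factorial • p l (fun _ => (1:ℂ)) := by
    rw [iteratedDeriv_eq_iteratedFDeriv, ← hp.factorial_smul (1:ℂ) l]
  have hcont : Continuous fun θ : ℝ => ‖g (circleMap 0 R θ)‖ :=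
    (hg.continuousOn.comp_continuous (continuous_circleMap 0 R)
      (fun θ => circleMap_mem_closedBall 0 R.coe_nonneg θ)).norm
  have hint : (∫ θ in (0:ℝ)..2*Real.pi, ‖g (circleMap 0 R θ)‖) ≤ C * (2*Real.pi) := by
    have h := intervalIntegral.integral_mono_on (by positivity : (0:ℝ) ≤ 2*Real.pi)
      (hcont.intervalIntegrable _ _)
      (intervalIntegrable_const : IntervalIntegrable (fun _ => C) volume 0 (2*Real.pi))
      (fun θ _ => hC _ (circleMap_mem_closedBall 0 R.coe_nonneg θ))
    simpa [intervalIntegral.integral_const, smul_eq_mul, mul_comm] using h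
  have h2 : ‖p l (fun _ => (1:ℂ))‖ ≤ ‖p l‖ := by
    have h := (p l).le_opNorm (fun _ => (1:ℂ))
    simpa using h
  have h3 : ‖p l‖ ≤ C / (R:ℝ) ^ l := by
    have h := norm_cauchyPowerSeries_le g 0 R l
    have habs : |(R:ℝ)| = (R:ℝ) := abs_of_nonneg R.coe_nonneg
    rw [habs] at h
    refine h.trans ?_
    rw [div_eq_mul_inv, ← inv_pow]
    have h4 : (2*Real.pi)⁻¹ * (∫ θ in (0:ℝ)..2*Real.pi, ‖g (circleMap 0 R θ)‖) ≤ C := by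
      rw [inv_mul_le_iff₀ (by positivity)]
      linarith [hint]
    exact mul_le_mul_of_nonneg_right h4 (by positivity)
  rw [h1]
  have h5 : (l.factorial • p l (fun _ => (1:ℂ))) = (l.factorial : ℂ) * p l (fun _ => (1:ℂ)) := by
    simp [nsmul_eq_mul]
  rw [h5, norm_mul, Complex.norm_natCast]
  exact mul_le_mul_of_nonneg_left (h2.trans h3) (by positivity)

set_option maxHeartbeats 2000000 in
theorem stmt16 (f : ℂ → ℂ)
    (hf : DifferentiableOn ℂ f (Metric.ball 0 1))
    (hmap : Set.MapsTo f (Metric.ball 0 1) (Metric.ball 0 1))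
    (h0 : f 0 = 0)
    (hlt : ‖deriv f 0‖ < 1) :
    ∃ n₀ : ℕ, ∀ k l n : ℕ, 0 < k → 0 < l → l ≤ n → n₀ ≤ n →
      ‖iteratedDeriv l (fun w => (f^[n] w) ^ k) 0‖ / (Nat.factorial l : ℝ)
        ≤ ‖deriv f 0‖ ^ (((k * n : ℕ) : ℝ) / 2) := by
  set a : ℝ := ‖deriv f 0‖ with ha_def
  -- iterates are differentiable and map the disk to itself
  have hmapn : ∀ n : ℕ, Set.MapsTo (f^[n]) (ball (0:ℂ) 1) (ball 0 1) := fun n => hmap.iterate n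
  have hdn : ∀ n : ℕ, DifferentiableOn ℂ (f^[n]) (ball (0:ℂ) 1) := by
    intro n; induction n with
    | zero => simpa using differentiableOn_id
    | succ n ih =>
      rw [Function.iterate_succ]
      exact ih.comp hf hmap
  -- the dslope function h
  have hh_diff : DifferentiableOn ℂ (dslope f 0) (ball (0:ℂ) 1) :=
    (differentiableOn_dslope (ball_mem_nhds 0 one_pos)).mpr hf
  have hfw : ∀ w : ℂ, f w = w * dslope f 0 w := by
    intro w
    have h := sub_smul_dslope f 0 w
    simp only [sub_zero, h0, smul_eq_mul] at h
    exact h.symm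
  have hds0 : dslope f 0 0 = deriv f 0 := dslope_same f 0
  rcases (norm_nonneg (deriv f 0)).eq_or_lt with ha0 | ha0
  · -- case a = 0
    have hd0 : deriv f 0 = 0 := by
      rw [← norm_eq_zero]; exact ha0.symm
    -- second dslope
    set h2 : ℂ → ℂ := dslope (dslope f 0) 0 with hh2def
    have hh2_diff : DifferentiableOn ℂ h2 (ball (0:ℂ) 1) :=
      (differentiableOn_dslope (ball_mem_nhds 0 one_pos)).mpr hh_diff
    have hhw : ∀ w : ℂ, dslope f 0 w = w * h2 w := by
      intro w
      have h := sub_smul_dslope (dslope f 0) 0 w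
      simp only [sub_zero, hds0, hd0, smul_eq_mul] at h
      exact h.symm
    have hfw2 : ∀ w : ℂ, f w = w^2 * h2 w := by
      intro w; rw [hfw w, hhw w]; ring
    set M : ℝ := ‖h2 0‖ + 1 with hMdef
    have hM1 : 1 ≤ M := by have h := norm_nonneg (h2 0); rw [hMdef]; linarith
    have hM0 : 0 < M := by linarith
    have hc2 : ContinuousAt h2 0 :=
      (hh2_diff.differentiableAt (ball_mem_nhds _ one_pos)).continuousAt
    have hev : ∀ᶠ w in 𝓝 (0:ℂ), ‖h2 w‖ < M :=
      Filter.Tendsto.eventually_lt_const (by rw [hMdef]; exact lt_add_of_pos_right _ one_pos) hc2.norm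
    obtain ⟨δ, hδ0, hδ⟩ := Metric.eventually_nhds_iff.mp hev
    set ρ : ℝ := min (δ/2) (min (1/(2*M)) (1/2)) with hρdef
    have hρ0 : 0 < ρ := by
      apply lt_min (by linarith)
      apply lt_min (by positivity) (by norm_num)
    have hρδ : ρ ≤ δ/2 := min_le_left _ _
    have hρM : M * ρ ≤ 1/2 := by
      have h : ρ ≤ 1/(2*M) := le_trans (min_le_right _ _) (min_le_left _ _)
      rw [le_div_iff₀ (by positivity)] at h
      nlinarith
    have hρhalf : ρ ≤ 1/2 := le_trans (min_le_right _ _) (min_le_right _ _)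
    clear_value M ρ
    have hh2b : ∀ w : ℂ, ‖w‖ ≤ ρ → ‖h2 w‖ ≤ M := by
      intro w hw
      have : dist w 0 < δ := by
        rw [dist_zero_right]; linarith
      exact (hδ this).le
    have hfquad : ∀ w : ℂ, ‖w‖ ≤ ρ → ‖f w‖ ≤ M * ‖w‖^2 := by
      intro w hw
      rw [hfw2 w, norm_mul, norm_pow]
      calc ‖w‖^2 * ‖h2 w‖ ≤ ‖w‖^2 * M :=
            mul_le_mul_of_nonneg_left (hh2b w hw) (by positivity)
        _ = M * ‖w‖^2 := by ring
    have hinv : ∀ w : ℂ, ‖w‖ ≤ ρ → ‖f w‖ ≤ ρ := by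
      intro w hw
      have h1 := hfquad w hw
      have h2' : M * ‖w‖^2 ≤ M * ρ * ‖w‖ := by
        have h3 := mul_le_mul_of_nonneg_left hw (mul_nonneg hM0.le (norm_nonneg w))
        nlinarith
      have h4 := mul_le_mul_of_nonneg_right hρM (norm_nonneg w)
      nlinarith [norm_nonneg w]
    have hS : ∀ n : ℕ, ∀ w : ℂ, ‖w‖ ≤ ρ → ‖f^[n] w‖ ≤ M^n * ‖w‖^(n+1) := by
      intro n
      induction n with
      | zero => intro w hw; simp
      | succ n ih =>
        intro w hw
        rw [Function.iterate_succ_apply]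
        have hfwρ : ‖f w‖ ≤ ρ := hinv w hw
        refine (ih (f w) hfwρ).trans ?_
        have hb1 : ‖f w‖^(n+1) ≤ (M * ‖w‖^2)^(n+1) :=
          pow_le_pow_left₀ (norm_nonneg _) (hfquad w hw) _
        have hb2 : M^n * ‖f w‖^(n+1) ≤ M^n * (M * ‖w‖^2)^(n+1) :=
          mul_le_mul_of_nonneg_left hb1 (by positivity)
        refine hb2.trans ?_
        have he : M^n * (M * ‖w‖^2)^(n+1) = (M^(n+1) * ‖w‖^(n+2)) * (M*‖w‖)^n := by
          ring
        rw [he]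
        have hMw : M * ‖w‖ ≤ 1 := by
          have := mul_le_mul_of_nonneg_left hw hM0.le
          linarith [hρM]
        have : (M*‖w‖)^n ≤ 1 := pow_le_one₀ (by positivity) hMw
        nlinarith [pow_nonneg hM0.le (n+1), pow_nonneg (norm_nonneg w) (n+2),
          mul_nonneg (pow_nonneg hM0.le (n+1)) (pow_nonneg (norm_nonneg w) (n+2))]
    refine ⟨1, ?_⟩
    intro k l n hk hl hln hn
    have hkn : (0:ℝ) < ((k*n : ℕ) : ℝ)/2 := by
      have : 1 ≤ k*n := Nat.one_le_iff_ne_zero.mpr (by positivity)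
      have : (1:ℝ) ≤ ((k*n : ℕ) : ℝ) := by exact_mod_cast this
      linarith
    have hrhs : a ^ (((k * n : ℕ) : ℝ) / 2) = 0 := by
      rw [ha_def, ← ha0]; exact Real.zero_rpow hkn.ne'
    rw [hrhs]
    -- show the numerator is ≤ 0 (hence = 0)
    have hD : ‖iteratedDeriv l (fun w => (f^[n] w) ^ k) 0‖ ≤ 0 := by
      refine le_of_forall_pos_le_add ?_
      intro ε hε
      set K : ℝ := (Nat.factorial l : ℝ) * M^(n*k) + 1 with hKdef
      have hK0 : 0 < K := by positivity
      have hKge : (Nat.factorial l : ℝ) * M^(n*k) + 1 ≤ K := le_of_eq hKdef.symm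
      clear_value K
      set t : ℝ := min ρ (ε / K) with htdef
      have ht0 : 0 < t := lt_min hρ0 (by positivity)
      have htρ : t ≤ ρ := min_le_left _ _
      have htK2 : t ≤ ε / K := min_le_right _ _
      clear_value t
      have ht1 : t < 1 := by
        have : t ≤ 1/2 := le_trans htρ hρhalf
        linarith
      have hgd : DifferentiableOn ℂ (fun w => (f^[n] w) ^ k) (closedBall 0 t) :=
        ((hdn n).mono (closedBall_subset_ball ht1)).pow k
      have hsup : ∀ w ∈ closedBall (0:ℂ) t, ‖(f^[n] w)^k‖ ≤ M^(n*k) * t^((n+1)*k) := by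
        intro w hw
        rw [mem_closedBall, dist_zero_right] at hw
        have h1 : ‖f^[n] w‖ ≤ M^n * t^(n+1) := by
          refine (hS n w (hw.trans htρ)).trans ?_
          exact mul_le_mul_of_nonneg_left
            (pow_le_pow_left₀ (norm_nonneg _) hw _) (by positivity)
        rw [norm_pow]
        calc ‖f^[n] w‖^k ≤ (M^n * t^(n+1))^k :=
              pow_le_pow_left₀ (norm_nonneg _) h1 _
          _ = M^(n*k) * t^((n+1)*k) := by rw [mul_pow, ← pow_mul, ← pow_mul]
      have hcb := cauchy_est ht0 hgd hsup l
      have hpow : M^(n*k) * t^((n+1)*k) / t^l ≤ M^(n*k) * t := by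
        have hle : l ≤ (n+1)*k := by
          calc l ≤ n := hln
            _ ≤ (n+1)*k := by nlinarith
        rw [mul_div_assoc, div_eq_mul_inv, ← pow_sub₀ _ ht0.ne' hle]
        have h1le : 1 ≤ (n+1)*k - l := by
          have : l + 1 ≤ (n+1)*k := by nlinarith
          omega
        exact mul_le_mul_of_nonneg_left
          (by simpa using pow_le_pow_of_le_one ht0.le ht1.le h1le) (by positivity)
      have htK : (Nat.factorial l : ℝ) * (M^(n*k) * t) ≤ ε := by
        have ht2 : t ≤ ε / K := htK2
        have : (Nat.factorial l : ℝ) * M^(n*k) * t ≤ (Nat.factorial l : ℝ) * M^(n*k) * (ε / K) :=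
          mul_le_mul_of_nonneg_left ht2 (by positivity)
        calc (Nat.factorial l : ℝ) * (M^(n*k) * t)
            = (Nat.factorial l : ℝ) * M^(n*k) * t := by ring
          _ ≤ (Nat.factorial l : ℝ) * M^(n*k) * (ε / K) := this
          _ ≤ ε := by
              have h6 : (Nat.factorial l : ℝ) * M^(n*k) * (ε / K) ≤ K * (ε / K) := by
                refine mul_le_mul_of_nonneg_right ?_ (by positivity)
                linarith
              have h7 : K * (ε / K) = ε := by field_simp
              linarith
      calc ‖iteratedDeriv l (fun w => (f^[n] w) ^ k) 0‖
          ≤ (Nat.factorial l : ℝ) * (M^(n*k) * t^((n+1)*k) / t^l) := hcb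
        _ ≤ (Nat.factorial l : ℝ) * (M^(n*k) * t) :=
            mul_le_mul_of_nonneg_left hpow (by positivity)
        _ ≤ ε := htK
        _ = 0 + ε := by ring
    have hD0 : ‖iteratedDeriv l (fun w => (f^[n] w) ^ k) 0‖ = 0 :=
      le_antisymm hD (norm_nonneg _)
    rw [hD0]
    simp
  · -- case a > 0
    have ha0p : 0 < a := by rw [ha_def]; exact ha0
    have hmaps' : Set.MapsTo f (ball (0:ℂ) 1) (ball (f 0) 1) := by rwa [h0]
    have hh1 : ∀ z ∈ ball (0:ℂ) 1, ‖dslope f 0 z‖ ≤ 1 := by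
      intro z hz
      have h := Complex.norm_dslope_le_div_of_mapsTo_ball hf (hmaps'.mono_right ball_subset_closedBall) hz
      simpa using h
    have hh2 : ∀ z ∈ ball (0:ℂ) 1, ‖dslope f 0 z‖ < 1 := by
      intro z hz
      rcases lt_or_eq_of_le (hh1 z hz) with h | h
      · exact h
      · exfalso
        have hmax : IsMaxOn (norm ∘ dslope f 0) (ball (0:ℂ) 1) z := by
          intro y hy
          simp only [Function.comp_apply, Set.mem_setOf_eq, h]
          exact hh1 y hy
        have heq := Complex.norm_eqOn_of_isPreconnected_of_isMaxOn
          (convex_ball (0:ℂ) 1).isPreconnected isOpen_ball hh_diff hz hmax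
        have h00 := heq (mem_ball_self one_pos)
        simp only [Function.comp_apply, Function.const_apply] at h00
        rw [hds0, h] at h00
        rw [ha_def] at hlt
        rw [h00] at hlt
        exact lt_irrefl _ hlt
    set r : ℝ := a ^ ((8:ℝ)⁻¹) with hrdef
    set b : ℝ := a ^ ((3:ℝ)/4) with hbdef
    have hr0 : 0 < r := Real.rpow_pos_of_pos ha0p _
    have hr1 : r < 1 := Real.rpow_lt_one ha0p.le hlt (by norm_num)
    have hb0 : 0 < b := Real.rpow_pos_of_pos ha0p _
    have hb1 : b < 1 := Real.rpow_lt_one ha0p.le hlt (by norm_num)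
    have hab : a < b := by
      rw [hbdef]
      nth_rewrite 1 [← Real.rpow_one a]
      exact Real.rpow_lt_rpow_of_exponent_gt ha0p hlt (by norm_num)
    have hsubr : closedBall (0:ℂ) r ⊆ ball 0 1 := closedBall_subset_ball hr1
    clear_value b
    obtain ⟨zM, hzM, hzMax⟩ := (isCompact_closedBall (0:ℂ) r).exists_isMaxOn
      ⟨0, mem_closedBall_self hr0.le⟩ ((hh_diff.continuousOn.mono hsubr).norm)
    set H : ℝ := ‖dslope f 0 zM‖ with hHdef
    have hH1 : H < 1 := hh2 zM (hsubr hzM)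
    have hHa : a ≤ H := by
      have h := hzMax (mem_closedBall_self hr0.le)
      simp only [Function.comp_apply, Set.mem_setOf_eq, hds0] at h
      rw [ha_def]
      exact h
    have hH0 : 0 < H := lt_of_lt_of_le ha0p hHa
    have hHb : ∀ w : ℂ, ‖w‖ ≤ r → ‖dslope f 0 w‖ ≤ H := by
      intro w hw
      exact hzMax (by rwa [mem_closedBall, dist_zero_right])
    clear_value H
    have hc0 : ContinuousAt (dslope f 0) 0 :=
      (hh_diff.differentiableAt (ball_mem_nhds _ one_pos)).continuousAt
    have hev : ∀ᶠ w in 𝓝 (0:ℂ), ‖dslope f 0 w‖ < b := by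
      refine Filter.Tendsto.eventually_lt_const ?_ hc0.norm
      show ‖dslope f 0 0‖ < b
      rw [hds0]
      exact hab
    clear_value a r
    obtain ⟨δ, hδ0, hδ⟩ := Metric.eventually_nhds_iff.mp hev
    set ρ : ℝ := min (δ/2) r with hρdef
    have hρ0 : 0 < ρ := lt_min (by linarith) hr0
    have hρr : ρ ≤ r := min_le_right _ _
    have hρδ : ρ ≤ δ/2 := min_le_left _ _
    have hhb : ∀ w : ℂ, ‖w‖ ≤ ρ → ‖dslope f 0 w‖ ≤ b := by
      intro w hw
      have hd : dist w 0 < δ := by rw [dist_zero_right]; linarith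
      exact (hδ hd).le
    clear_value ρ
    obtain ⟨s₀, hs₀⟩ := exists_pow_lt_of_lt_one (div_pos hρ0 hr0) hH1
    have hs₀r : H ^ s₀ * r ≤ ρ := by
      rw [← le_div_iff₀ hr0]
      exact hs₀.le
    have claim1 : ∀ m : ℕ, ∀ w : ℂ, ‖w‖ ≤ r → ‖f^[m] w‖ ≤ H^m * ‖w‖ := by
      intro m
      induction m with
      | zero => intro w hw; simp
      | succ m ih =>
        intro w hw
        rw [Function.iterate_succ_apply]
        have hfw1 : ‖f w‖ ≤ H * ‖w‖ := by
          rw [hfw w, norm_mul]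
          calc ‖w‖ * ‖dslope f 0 w‖ ≤ ‖w‖ * H :=
                mul_le_mul_of_nonneg_left (hHb w hw) (norm_nonneg w)
            _ = H * ‖w‖ := mul_comm _ _
        have hfwr : ‖f w‖ ≤ r := by
          have h := mul_le_mul hH1.le hw (norm_nonneg w) zero_le_one
          linarith
        calc ‖f^[m] (f w)‖ ≤ H^m * ‖f w‖ := ih (f w) hfwr
          _ ≤ H^m * (H * ‖w‖) := mul_le_mul_of_nonneg_left hfw1 (pow_nonneg hH0.le m)
          _ = H^(m+1) * ‖w‖ := by ring
    have claim2 : ∀ m : ℕ, ∀ w : ℂ, ‖w‖ ≤ ρ → ‖f^[m] w‖ ≤ b^m * ‖w‖ := by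
      intro m
      induction m with
      | zero => intro w hw; simp
      | succ m ih =>
        intro w hw
        rw [Function.iterate_succ_apply]
        have hfw1 : ‖f w‖ ≤ b * ‖w‖ := by
          rw [hfw w, norm_mul]
          calc ‖w‖ * ‖dslope f 0 w‖ ≤ ‖w‖ * b :=
                mul_le_mul_of_nonneg_left (hhb w hw) (norm_nonneg w)
            _ = b * ‖w‖ := mul_comm _ _
        have hfwρ : ‖f w‖ ≤ ρ := by
          have h := mul_le_mul hb1.le hw (norm_nonneg w) zero_le_one
          linarith
        calc ‖f^[m] (f w)‖ ≤ b^m * ‖f w‖ := ih (f w) hfwρ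
          _ ≤ b^m * (b * ‖w‖) := mul_le_mul_of_nonneg_left hfw1 (pow_nonneg hb0.le m)
          _ = b^(m+1) * ‖w‖ := by ring
    have claim3 : ∀ m : ℕ, ∀ w : ℂ, ‖w‖ ≤ r → ‖f^[m + s₀] w‖ ≤ b^m := by
      intro m w hw
      rw [Function.iterate_add_apply]
      have h1 : ‖f^[s₀] w‖ ≤ ρ := by
        have h2 := claim1 s₀ w hw
        have h3 : H^s₀ * ‖w‖ ≤ H^s₀ * r := mul_le_mul_of_nonneg_left hw (pow_nonneg hH0.le _)
        linarith
      have h4 := claim2 m (f^[s₀] w) h1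
      refine h4.trans ?_
      calc b^m * ‖f^[s₀] w‖ ≤ b^m * 1 := by
            refine mul_le_mul_of_nonneg_left ?_ (pow_nonneg hb0.le _)
            exact h1.trans (by linarith)
        _ = b^m := mul_one _
    refine ⟨6*s₀ + 6, ?_⟩
    intro k l n hk hl hln hn
    have hsn : s₀ ≤ n := by omega
    obtain ⟨q, rfl⟩ : ∃ q, n = q + s₀ := ⟨n - s₀, (Nat.sub_add_cancel hsn).symm⟩
    have hgd : DifferentiableOn ℂ (fun w => (f^[q + s₀] w) ^ k) (closedBall 0 r) :=
      ((hdn (q + s₀)).mono hsubr).pow k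
    have hsup : ∀ w ∈ closedBall (0:ℂ) r, ‖(f^[q + s₀] w)^k‖ ≤ (b^q)^k := by
      intro w hw
      rw [mem_closedBall, dist_zero_right] at hw
      rw [norm_pow]
      exact pow_le_pow_left₀ (norm_nonneg _) (claim3 q w hw) _
    have hcb := cauchy_est hr0 hgd hsup l
    have hbpow : (b^q)^k = a ^ ((3/4 : ℝ) * ((q*k : ℕ) : ℝ)) := by
      rw [hbdef, ← pow_mul, ← Real.rpow_natCast (a ^ ((3:ℝ)/4)) (q*k), ← Real.rpow_mul ha0p.le]
    have hrpow : r^l = a ^ ((8:ℝ)⁻¹ * (l : ℝ)) := by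
      rw [hrdef, ← Real.rpow_natCast (a ^ ((8:ℝ)⁻¹)) l, ← Real.rpow_mul ha0p.le]
    have hexp : ((k*(q+s₀) : ℕ) : ℝ)/2 ≤ (3/4:ℝ) * ((q*k : ℕ) : ℝ) - (8:ℝ)⁻¹ * (l : ℝ) := by
      push_cast
      have h1 : (l:ℝ) ≤ (q:ℝ) + (s₀:ℝ) := by exact_mod_cast hln
      have h2 : (1:ℝ) ≤ (k:ℝ) := by exact_mod_cast hk
      have h3 : 6*(s₀:ℝ) + 6 ≤ (q:ℝ) + (s₀:ℝ) := by exact_mod_cast hn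
      have h4 : (0:ℝ) ≤ (k:ℝ) := by positivity
      have h5 : (0:ℝ) ≤ (s₀:ℝ) := by positivity
      have p1 : (6*(s₀:ℝ) + 6)*(k:ℝ) ≤ ((q:ℝ)+(s₀:ℝ))*(k:ℝ) :=
        mul_le_mul_of_nonneg_right h3 h4
      have p2 : (l:ℝ) ≤ ((q:ℝ)+(s₀:ℝ))*(k:ℝ) := by nlinarith
      nlinarith
    have key : (b^q)^k / r^l ≤ a ^ (((k*(q+s₀) : ℕ) : ℝ)/2) := by
      rw [hbpow, hrpow, ← Real.rpow_sub ha0p]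
      exact Real.rpow_le_rpow_of_exponent_ge ha0p hlt.le hexp
    rw [div_le_iff₀ (show (0:ℝ) < (Nat.factorial l : ℝ) by positivity)]
    calc ‖iteratedDeriv l (fun w => (f^[q+s₀] w)^k) 0‖
        ≤ (Nat.factorial l : ℝ) * ((b^q)^k / r^l) := hcb
      _ ≤ (Nat.factorial l : ℝ) * (a ^ (((k*(q+s₀):ℕ):ℝ)/2)) :=
          mul_le_mul_of_nonneg_left key (by positivity)
      _ = a ^ (((k*(q+s₀):ℕ):ℝ)/2) * (Nat.factorial l : ℝ) := by ring
end
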